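/- The dual labeling λ_•^* is an EL-labeling of the order dual (Π_n^•)^* of the pointed partition poset: every closed interval of (Π_n^•)^* contains a unique increasing maximal chain which lexicographically precedes all other maximal chains of that interval, where cover relations of (Π_n^•)^* carry the same labels as the corresponding cover relations of Π_n^• and the label poset is the order dual (Λ_n^•)^*. Consequently the maximal intervals of (Π_n^•)^* are EL-shellable. -/

import Mathlib

open Finset

open scoped BigOperators Classical

/-! ## Generic machinery for edge labelings of posets presented by cover relations -/

section Chains

variable {α : Type*} {L : Type*}

/-- The word of labels read along a list of poset elements. -/
def wordOf (lab : α → α → L) : List α → List L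
  | x :: y :: rest => lab x y :: wordOf lab (y :: rest)
  | _ => []

/-- `c` is a saturated chain from `x` to `y` with respect to the cover relation `cov`;
in a graded poset these are exactly the maximal chains of the interval `[x, y]`. -/
def IsSatChain (cov : α → α → Prop) (x y : α) (c : List α) : Prop :=
  c.Chain' cov ∧ c.head? = some x ∧ c.getLast? = some y

/-- A word of labels is increasing if consecutive labels strictly increase. -/
def IncWord (lt : L → L → Prop) (w : List L) : Prop := w.Chain' lt

/-- A word of labels is ascent-free if no consecutive pair of labels strictly increases. -/
def AscFree (lt : L → L → Prop) (w : List L) : Prop := w.Chain' fun a b => ¬ lt a b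

/-- The partial order generated by a cover relation. -/
def leOf (cov : α → α → Prop) : α → α → Prop := Relation.ReflTransGen cov

/-- The strict order generated by a cover relation. -/
def ltOf (cov : α → α → Prop) (a b : α) : Prop := leOf cov a b ∧ a ≠ b

/-- An ER-labeling: every closed interval has a unique increasing maximal chain. -/
def IsERLabeling (cov : α → α → Prop) (lab : α → α → L) (lt : L → L → Prop) : Prop :=
  ∀ x y, leOf cov x y → ∃! c, IsSatChain cov x y c ∧ IncWord lt (wordOf lab c)

/-- The rank two switching property: in every rank-two interval whose increasing chain
has word of labels `ab`, there is a unique chain with word of labels `ba`. -/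
def RankTwoSwitch (cov : α → α → Prop) (lab : α → α → L) (lt : L → L → Prop) : Prop :=
  ∀ x y c a b, IsSatChain cov x y c → IncWord lt (wordOf lab c) → wordOf lab c = [a, b] →
    ∃! c', IsSatChain cov x y c' ∧ wordOf lab c' = [b, a]

/-- In every interval, distinct ascent-free maximal chains have distinct label words. -/
def AscFreeInj (cov : α → α → Prop) (lab : α → α → L) (lt : L → L → Prop) : Prop :=
  ∀ x y c c', IsSatChain cov x y c → IsSatChain cov x y c' →
    AscFree lt (wordOf lab c) → AscFree lt (wordOf lab c') →
    wordOf lab c = wordOf lab c' → c = c'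

/-- An EW-labeling. -/
def IsEWLabeling (cov : α → α → Prop) (lab : α → α → L) (lt : L → L → Prop) : Prop :=
  IsERLabeling cov lab lt ∧ RankTwoSwitch cov lab lt ∧ AscFreeInj cov lab lt

/-- An EL-labeling: every closed interval has a unique increasing maximal chain,
which lexicographically precedes every other maximal chain of the interval. -/
def IsELLabeling (cov : α → α → Prop) (lab : α → α → L) (lt : L → L → Prop) : Prop :=
  ∀ x y, leOf cov x y →
    ∃ c, (IsSatChain cov x y c ∧ IncWord lt (wordOf lab c)) ∧
      ∀ c', IsSatChain cov x y c' → c' ≠ c →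
        ¬ IncWord lt (wordOf lab c') ∧ List.Lex lt (wordOf lab c) (wordOf lab c')

end Chains

/-! ## Möbius functions and Whitney numbers -/

section Whitney

variable {α : Type*} {β : Type*}

/-- Auxiliary Möbius function computed with fuel; for an element of rank `k` of a
graded poset, fuel `k` computes the one-variable Möbius function `μ(0̂, ·)`. -/
noncomputable def muAux (ltr : α → α → Prop) (bot : α) : ℕ → α → ℤ
  | 0, x => if x = bot then 1 else 0
  | k + 1, x => if x = bot then 1 else - ∑ᶠ (y : α) (_ : ltr y x), muAux ltr bot k y

/-- The one-variable Möbius function `μ(0̂, x)` of a graded poset presented by its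
cover relation `cov`, minimum `bot` and rank function `rk`. -/
noncomputable def muBot (cov : α → α → Prop) (bot : α) (rk : α → ℕ) (x : α) : ℤ :=
  muAux (ltOf cov) bot (rk x) x

/-- The `k`-th Whitney number of the first kind. -/
noncomputable def whitney1 (cov : α → α → Prop) (bot : α) (rk : α → ℕ) (k : ℕ) : ℤ :=
  ∑ᶠ (x : α) (_ : rk x = k), muBot cov bot rk x

/-- The `k`-th Whitney number of the second kind. -/
noncomputable def whitney2 (rk : α → ℕ) (k : ℕ) : ℕ :=
  Nat.card {x : α // rk x = k}

/-- Two graded posets are Whitney duals if their Whitney numbers of the first and second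
kind are swapped (up to sign). -/
def IsWhitneyDual (covP : α → α → Prop) (botP : α) (rkP : α → ℕ)
    (covQ : β → β → Prop) (botQ : β) (rkQ : β → ℕ) : Prop :=
  ∀ k, (whitney1 covP botP rkP k).natAbs = whitney2 rkQ k ∧
       (whitney1 covQ botQ rkQ k).natAbs = whitney2 rkP k

/-- Two graded posets are Whitney twins if they have the same Whitney numbers of the first
and of the second kind. -/
def IsWhitneyTwin (covP : α → α → Prop) (botP : α) (rkP : α → ℕ)
    (covQ : β → β → Prop) (botQ : β) (rkQ : β → ℕ) : Prop :=
  ∀ k, whitney1 covP botP rkP k = whitney1 covQ botQ rkQ k ∧ whitney2 rkP k = whitney2 rkQ k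

/-- `(cov, bot, rk)` presents a graded poset with minimum `bot`. -/
def IsGradedPoset (cov : α → α → Prop) (bot : α) (rk : α → ℕ) : Prop :=
  (∀ x, leOf cov bot x) ∧ rk bot = 0 ∧ ∀ x y, cov x y → rk y = rk x + 1

/-- A graded poset has a Whitney dual. -/
def HasWhitneyDual {γ : Type} (cov : γ → γ → Prop) (bot : γ) (rk : γ → ℕ) : Prop :=
  ∃ (β : Type) (_ : Finite β) (covQ : β → β → Prop) (botQ : β) (rkQ : β → ℕ),
    IsGradedPoset covQ botQ rkQ ∧ IsWhitneyDual cov bot rk covQ botQ rkQ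

/-- Isomorphism of the posets generated by two cover relations. -/
def CovPosetIso (covP : α → α → Prop) (covQ : β → β → Prop) : Prop :=
  ∃ e : α ≃ β, ∀ x y, leOf covP x y ↔ leOf covQ (e x) (e y)

end Whitney

/-! ## The label posets `Λₙʷ` and `Λₙ•` (strict order relations)

Labels are triples `(a, b, u)` with `a < b` in `[n]` and `u ∈ {0,1}` (encoded as `Bool`). -/

/-- The strict order of `Λₙʷ = Γ₁ ⊕ ⋯ ⊕ Γ_{n-1}` where `Γ_a` carries the product order
`(a,b)ᵘ ≤ (a,c)ᵛ ↔ b ≤ c ∧ u ≤ v`. -/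
def ltLw (x y : ℕ × ℕ × Bool) : Prop :=
  x.1 < y.1 ∨ (x.1 = y.1 ∧ x.2.1 ≤ y.2.1 ∧ x.2.2 ≤ y.2.2 ∧ x.2 ≠ y.2)

/-- The strict order of `Λₙ• = A₁ ⊕ C₁ ⊕ ⋯ ⊕ A_{n-1} ⊕ C_{n-1}` where `A_a` is the
antichain of the `(a,b)⁰` and `C_a` is the chain of the `(a,b)¹` ordered by `b`. -/
def ltLp (x y : ℕ × ℕ × Bool) : Prop :=
  x.1 < y.1 ∨ (x.1 = y.1 ∧
    ((x.2.2 = false ∧ y.2.2 = true) ∨ (x.2.2 = true ∧ y.2.2 = true ∧ x.2.1 < y.2.1)))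

/-! ## Pointed and weighted partition posets -/

/-- The minimum of a finite set of naturals (`0` for the empty set). -/
def minB (B : Finset ℕ) : ℕ := B.min.untopD 0

/-- Pointed partitions of the ground set `A`: partitions of `A` into blocks, each block
carrying a distinguished (pointed) element.  A pointed block is a pair `(B, p)` with `p ∈ B`. -/
abbrev PPart (A : Finset ℕ) : Type :=
  {π : Finset (Finset ℕ × ℕ) //
    (∀ b ∈ π, b.2 ∈ b.1) ∧
    (∀ b ∈ π, ∀ b' ∈ π, b ≠ b' → Disjoint b.1 b'.1) ∧
    π.biUnion Prod.fst = A}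

/-- The cover relation of the pointed partition poset: merge two pointed blocks, the merged
block being pointed at the pointed element of one of the two. -/
def covPP {A : Finset ℕ} (π π' : PPart A) : Prop :=
  ∃ b1 ∈ π.1, ∃ b2 ∈ π.1, minB b1.1 < minB b2.1 ∧
    ∃ p : ℕ, (p = b1.2 ∨ p = b2.2) ∧
      π'.1 = insert (b1.1 ∪ b2.1, p) ((π.1.erase b1).erase b2)

/-- The labeling `λ•` (as a bare label map): the cover `u`-merging blocks `A, B` with
`min A < min B` gets the label `(min A, min B, u)`, where `u = 1` exactly when the merged
block is pointed at the pointed element of `A`. -/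
noncomputable def labPP {A : Finset ℕ} (π π' : PPart A) : ℕ × ℕ × Bool :=
  let olds := π.1 \ π'.1
  let mins := olds.image (fun b => minB b.1)
  (mins.min.untopD 0, mins.max.unbotD 0,
    if ∃ b ∈ olds, minB b.1 = mins.min.untopD 0 ∧ ∃ d ∈ π'.1 \ π.1, d.2 = b.2
      then true else false)

/-- The minimum of the pointed partition poset: all blocks are pointed singletons. -/
def botPP (A : Finset ℕ) : PPart A :=
  ⟨A.image fun i => ({i}, i), by
    refine ⟨?_, ?_, ?_⟩
    · intro b hb
      obtain ⟨i, -, rfl⟩ := Finset.mem_image.1 hb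
      exact Finset.mem_singleton_self i
    · intro b hb b' hb' hne
      obtain ⟨i, -, rfl⟩ := Finset.mem_image.1 hb
      obtain ⟨j, -, rfl⟩ := Finset.mem_image.1 hb'
      have hij : i ≠ j := fun h => hne (by rw [h])
      simp [Finset.disjoint_left, hij]
    · ext x
      simp⟩

/-- The rank function of the pointed partition poset. -/
def rkPP {A : Finset ℕ} (π : PPart A) : ℕ := A.card - π.1.card

/-- Weighted partitions of the ground set `A`: partitions of `A` into blocks, each block `B`
carrying a weight `v` with `0 ≤ v ≤ |B| - 1`. -/
abbrev WPart (A : Finset ℕ) : Type :=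
  {π : Finset (Finset ℕ × ℕ) //
    (∀ b ∈ π, b.2 < b.1.card) ∧
    (∀ b ∈ π, ∀ b' ∈ π, b ≠ b' → Disjoint b.1 b'.1) ∧
    π.biUnion Prod.fst = A}

/-- The cover relation of the weighted partition poset: merge blocks `A^v, B^w` into
`(A ∪ B)^(v+w+u)` for some `u ∈ {0,1}`. -/
def covWP {A : Finset ℕ} (π π' : WPart A) : Prop :=
  ∃ b1 ∈ π.1, ∃ b2 ∈ π.1, minB b1.1 < minB b2.1 ∧ ∃ u : Bool,
    π'.1 = insert (b1.1 ∪ b2.1, b1.2 + b2.2 + (if u then 1 else 0)) ((π.1.erase b1).erase b2)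

/-- The labeling `λ_w` (as a bare label map): the cover merging `A^v, B^w` with
`min A < min B` into `(A ∪ B)^(v+w+u)` gets the label `(min A, min B, u)`. -/
noncomputable def labWP {A : Finset ℕ} (π π' : WPart A) : ℕ × ℕ × Bool :=
  let olds := π.1 \ π'.1
  let mins := olds.image (fun b => minB b.1)
  (mins.min.untopD 0, mins.max.unbotD 0,
    if (π'.1 \ π.1).sum Prod.snd = olds.sum Prod.snd + 1 then true else false)

/-- The minimum of the weighted partition poset: all blocks singletons of weight `0`. -/
def botWP (A : Finset ℕ) : WPart A :=
  ⟨A.image fun i => ({i}, 0), by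
    refine ⟨?_, ?_, ?_⟩
    · intro b hb
      obtain ⟨i, -, rfl⟩ := Finset.mem_image.1 hb
      simp
    · intro b hb b' hb' hne
      obtain ⟨i, -, rfl⟩ := Finset.mem_image.1 hb
      obtain ⟨j, -, rfl⟩ := Finset.mem_image.1 hb'
      have hij : i ≠ j := fun h => hne (by rw [h])
      simp [Finset.disjoint_left, hij]
    · ext x
      simp⟩

/-- The rank function of the weighted partition poset. -/
def rkWP {A : Finset ℕ} (π : WPart A) : ℕ := A.card - π.1.card
/-! ## Bicolored binary trees and Lyndon forests -/

/-- Planar binary trees with `ℕ`-labeled leaves and `Bool`-colored internal vertices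
(`false` = color 0, `true` = color 1). -/
inductive BT : Type
  | leaf : ℕ → BT
  | node : Bool → BT → BT → BT
deriving DecidableEq

namespace BT

/-- The valency: the minimum leaf label of a tree. -/
def nu : BT → ℕ
  | leaf a => a
  | node _ l r => min l.nu r.nu

/-- The set of leaf labels of a tree. -/
def leaves : BT → Finset ℕ
  | leaf a => {a}
  | node _ l r => l.leaves ∪ r.leaves

/-- The number of internal vertices of a tree. -/
def internals : BT → ℕ
  | leaf _ => 0
  | node _ l r => l.internals + r.internals + 1

/-- A tree is normalized if its leaf labels are distinct and every internal vertex has the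
same valency as its left child. -/
def normalized : BT → Prop
  | leaf _ => True
  | node _ l r => l.normalized ∧ r.normalized ∧ Disjoint l.leaves r.leaves ∧ l.nu < r.nu

/-- The pointed Lyndon condition: at every internal vertex `v` with internal left child,
`color (L v) ≥ color v`, and if `color (L v) = color v = 1` then `v` is a Lyndon vertex,
i.e. `ν (R (L v)) > ν (R v)`. -/
def pLyn : BT → Prop
  | leaf _ => True
  | node c l r => l.pLyn ∧ r.pLyn ∧
      (match l with
       | leaf _ => True
       | node c' _ r' => c ≤ c' ∧ ((c' = c ∧ c = true) → r.nu < r'.nu))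

/-- The bicolored Lyndon condition: every internal vertex with internal left child is
Lyndon (`ν (R (L v)) > ν (R v)`) or satisfies `color (L v) > color v`. -/
def wLyn : BT → Prop
  | leaf _ => True
  | node c l r => l.wLyn ∧ r.wLyn ∧
      (match l with
       | leaf _ => True
       | node c' _ r' => r.nu < r'.nu ∨ c < c')

/-- The pointed element of a bicolored tree: a `1`-colored vertex keeps the point of its
left subtree and a `0`-colored vertex keeps the point of its right subtree. -/
def ppt : BT → ℕ
  | leaf a => a
  | node c l r => if c then l.ppt else r.ppt

end BT

/-- `u`-merging of two pointed Lyndon trees: create a new root of color `u` with the two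
trees as subtrees, then repeatedly slide the new vertex together with its right subtree
past its left child until the pointed Lyndon condition holds at the new vertex. -/
def mergeP (u : Bool) : BT → BT → BT
  | BT.leaf a, t2 => BT.node u (BT.leaf a) t2
  | BT.node c a b, t2 =>
      if u ≤ c ∧ ((c = true ∧ u = true) → t2.nu < b.nu)
      then BT.node u (BT.node c a b) t2
      else BT.node c (mergeP u a t2) b

/-- `u`-merging of two bicolored Lyndon trees: create a new root of color `u` with the two
trees as subtrees, then repeatedly slide the new vertex together with its right subtree
past its left child until the bicolored Lyndon condition holds at the new vertex. -/
def mergeW (u : Bool) : BT → BT → BT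
  | BT.leaf a, t2 => BT.node u (BT.leaf a) t2
  | BT.node c a b, t2 =>
      if t2.nu < b.nu ∨ u < c
      then BT.node u (BT.node c a b) t2
      else BT.node c (mergeW u a t2) b

/-- A valid forest on the ground set `[n]`, each tree normalized and satisfying `P`, the
trees having pairwise disjoint leaf sets which together cover `[n] = {1, …, n}`. -/
def ForestValid (n : ℕ) (P : BT → Prop) (F : Finset BT) : Prop :=
  (∀ t ∈ F, t.normalized ∧ P t) ∧
  (∀ t ∈ F, ∀ t' ∈ F, t ≠ t' → Disjoint t.leaves t'.leaves) ∧
  F.biUnion BT.leaves = Finset.Icc 1 n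

/-- The set of pointed Lyndon forests on `[n]`. -/
abbrev FLynP (n : ℕ) : Type := {F : Finset BT // ForestValid n BT.pLyn F}

/-- The set of bicolored Lyndon forests on `[n]`. -/
abbrev FLynW (n : ℕ) : Type := {F : Finset BT // ForestValid n BT.wLyn F}

/-- The cover relation on forests: `u`-merge two of the trees (the one with smaller minimum
leaf label going to the left). -/
def covForest (merge : Bool → BT → BT → BT) (F F' : Finset BT) : Prop :=
  ∃ t1 ∈ F, ∃ t2 ∈ F, t1.nu < t2.nu ∧ ∃ u : Bool,
    F' = insert (merge u t1 t2) ((F.erase t1).erase t2)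

/-- The cover relation of the poset of pointed Lyndon forests `FLyn_n^•`. -/
def covFP {n : ℕ} (F F' : FLynP n) : Prop := covForest mergeP F.1 F'.1

/-- The cover relation of the poset of bicolored Lyndon forests `FLyn_n^w`. -/
def covFW {n : ℕ} (F F' : FLynW n) : Prop := covForest mergeW F.1 F'.1

/-- The forest of `n` isolated leaves. -/
def botForest (n : ℕ) : Finset BT := (Finset.Icc 1 n).image BT.leaf

theorem botForest_valid (n : ℕ) (P : BT → Prop) (hP : ∀ a, P (BT.leaf a)) :
    ForestValid n P (botForest n) := by
  refine ⟨?_, ?_, ?_⟩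
  · intro t ht
    obtain ⟨i, -, rfl⟩ := Finset.mem_image.1 ht
    exact ⟨trivial, hP i⟩
  · intro t ht t' ht' hne
    obtain ⟨i, -, rfl⟩ := Finset.mem_image.1 ht
    obtain ⟨j, -, rfl⟩ := Finset.mem_image.1 ht'
    have hij : i ≠ j := fun h => hne (by rw [h])
    simp only [BT.leaves]
    simp [Finset.disjoint_left, hij]
  · ext x
    simp [botForest, BT.leaves]

/-- The minimum of the poset of pointed Lyndon forests. -/
def botFP (n : ℕ) : FLynP n := ⟨botForest n, botForest_valid n _ fun _ => trivial⟩

/-- The minimum of the poset of bicolored Lyndon forests. -/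
def botFW (n : ℕ) : FLynW n := ⟨botForest n, botForest_valid n _ fun _ => trivial⟩

/-- The rank of a forest: its total number of internal vertices. -/
def rkForest (F : Finset BT) : ℕ := F.sum BT.internals

/-- The rank function of `FLyn_n^•`. -/
def rkFP {n : ℕ} (F : FLynP n) : ℕ := rkForest F.1

/-- The rank function of `FLyn_n^w`. -/
def rkFW {n : ℕ} (F : FLynW n) : ℕ := rkForest F.1

/-! ## The Whitney dual construction `R_λ(P)` -/

section RPoset

variable {α : Type*} {L : Type*}

/-- Swap the leftmost ascent of a word of labels. -/
noncomputable def swapFirstAscent (lt : L → L → Prop) : List L → List L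
  | a :: b :: rest => if lt a b then b :: a :: rest else a :: swapFirstAscent lt (b :: rest)
  | w => w

/-- Sort a word of labels by repeatedly swapping its leftmost ascent until it is
ascent-free. -/
noncomputable def sortWord (lt : L → L → Prop) (w : List L) : List L :=
  (swapFirstAscent lt)^[w.length * w.length] w

/-- The underlying set of the Whitney dual `R_λ(P)`: pairs `(x, w)` where `w` is the label
word of an ascent-free saturated chain from `0̂` to `x`. -/
abbrev RPoset (cov : α → α → Prop) (lab : α → α → L) (lt : L → L → Prop) (bot : α) : Type _ :=
  {q : α × List L //
    ∃ c, IsSatChain cov bot q.1 c ∧ AscFree lt (wordOf lab c) ∧ wordOf lab c = q.2}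

/-- The cover relation of `R_λ(P)`: `(x, w) ⋖ (y, u)` iff `x ⋖ y` and `u` is obtained by
sorting the label of `x ⋖ y` into `w`. -/
def covR (cov : α → α → Prop) (lab : α → α → L) (lt : L → L → Prop) (bot : α)
    (p q : RPoset cov lab lt bot) : Prop :=
  cov p.1.1 q.1.1 ∧ q.1.2 = sortWord lt (p.1.2 ++ [lab p.1.1 q.1.1])

end RPoset

/-! ## Reiner's poset of rooted spanning forests -/

/-- A rooted spanning forest on `[n]`, encoded by its parent function: `f i` is the parent
of the vertex `i` (`f i = i` for roots), vertices outside `[n]` being fixed, and every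
vertex reaching a root after finitely many steps (acyclicity). -/
def SFvalid (n : ℕ) (f : ℕ → ℕ) : Prop :=
  (∀ i ∈ Finset.Icc 1 n, f i ∈ Finset.Icc 1 n) ∧
  (∀ i, i ∉ Finset.Icc 1 n → f i = i) ∧
  (∀ i, ∃ k, f^[k + 1] i = f^[k] i)

/-- Reiner's poset `SF_n` of rooted spanning forests of the complete graph on `[n]`. -/
abbrev SF (n : ℕ) : Type := {f : ℕ → ℕ // SFvalid n f}

/-- The cover relation of `SF_n`: add an edge between the roots of two trees, one of the
two roots becoming the root of the merged tree. -/
def covSF {n : ℕ} (f g : SF n) : Prop :=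
  ∃ r1 ∈ Finset.Icc 1 n, ∃ r2 ∈ Finset.Icc 1 n, r1 ≠ r2 ∧
    f.1 r1 = r1 ∧ f.1 r2 = r2 ∧
    (g.1 = Function.update f.1 r1 r2 ∨ g.1 = Function.update f.1 r2 r1)

/-- The rank of a rooted spanning forest: its number of edges. -/
def rkSF {n : ℕ} (f : SF n) : ℕ := ((Finset.Icc 1 n).filter fun i => f.1 i ≠ i).card
/-! ## Further constructions used in particular statements -/

/-- The map `Φ` on underlying finsets: a pointed block `(B, q)` of a pointed partition
above `α` is sent to the set of minima of the `α`-blocks contained in `B`, pointed at the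
minimum of the `α`-block containing `q`. -/
noncomputable def PhiMap (af : Finset (Finset ℕ × ℕ)) (pf : Finset (Finset ℕ × ℕ)) :
    Finset (Finset ℕ × ℕ) :=
  pf.image fun b =>
    ((af.filter fun c => c.1 ⊆ b.1).image fun c => minB c.1,
     ((af.filter fun c => b.2 ∈ c.1).image fun c => minB c.1).min.untopD 0)

/-- The expected word of labels of the unique increasing maximal chain of the interval
`[0̂, [n]^p]` of the pointed partition poset:
`(1,2)¹ ⋯ (1,n)¹` if `p = 1`, and `(1,p)⁰ (1,2)¹ ⋯ (1,p-1)¹ (1,p+1)¹ ⋯ (1,n)¹` otherwise. -/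
def expectedWordP (n p : ℕ) : List (ℕ × ℕ × Bool) :=
  let base := (List.range (n - 1)).map fun i => ((1 : ℕ), i + 2, true)
  if p = 1 then base else ((1 : ℕ), p, false) :: base.erase (1, p, true)

/-- Merge two words of labels, each with non-increasing first components, into a single
word with non-increasing first components. -/
def mergeByNu : List (ℕ × ℕ × Bool) → List (ℕ × ℕ × Bool) → List (ℕ × ℕ × Bool)
  | [], ys => ys
  | xs, [] => xs
  | x :: xs, y :: ys =>
      if y.1 ≤ x.1 then x :: mergeByNu xs (y :: ys) else y :: mergeByNu (x :: xs) ys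
termination_by xs ys => xs.length + ys.length

/-- The word of labels of a tree read along the reverse-minimal linear extension of its
internal vertices: the internal vertex `v` contributes `(ν (L v), ν (R v), color v)`, the
vertices being listed with non-increasing valencies (descendants first among equal
valencies). -/
def BT.rmword : BT → List (ℕ × ℕ × Bool)
  | BT.leaf _ => []
  | BT.node c l r => mergeByNu l.rmword r.rmword ++ [(l.nu, r.nu, c)]

/-- The word of labels of the saturated chain `c(F)` associated to a forest `F`, read along
the reverse-minimal linear extension of the internal vertices of `F`. -/
noncomputable def forestWord (F : Finset BT) : List (ℕ × ℕ × Bool) :=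
  (F.toList.map BT.rmword).foldr mergeByNu []

/-- `TLyn_{n,p}^•`: pointed Lyndon trees on `[n]` whose associated chain ends at `[n]^p`,
i.e. whose tracked pointed element is `p`. -/
abbrev TLynBullet (n p : ℕ) : Type :=
  {T : BT // T.normalized ∧ T.pLyn ∧ T.leaves = Finset.Icc 1 n ∧ T.ppt = p}

/-- The labeling `λ̃` of `Πₙ•` proposed by Bellier-Millès, Delcroix-Oger and Hoffbeck:
the cover `u`-merging blocks with minima `a < b` in a pointed partition `π` with `|π|`
blocks is labeled `(b, a + n - |π|)` if `u = 0` and `(b, b + n - |π|)` if `u = 1`. -/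
noncomputable def labT (n : ℕ) {A : Finset ℕ} (π π' : PPart A) : ℕ × ℕ :=
  let olds := π.1 \ π'.1
  let mins := olds.image fun b => minB b.1
  let a := mins.min.untopD 0
  let b := mins.max.unbotD 0
  if ∃ c ∈ olds, minB c.1 = a ∧ ∃ d ∈ π'.1 \ π.1, d.2 = c.2
  then (b, b + n - π.1.card)
  else (b, a + n - π.1.card)

/-- The (strict) lexicographic order on `ℕ × ℕ`. -/
def ltT (x y : ℕ × ℕ) : Prop := x.1 < y.1 ∨ (x.1 = y.1 ∧ x.2 < y.2)

section ELProofDev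

variable {A : Finset ℕ}

/-! ### Basic facts about `minB` -/

lemma minB_mem {B : Finset ℕ} (h : B.Nonempty) : minB B ∈ B := by
  obtain ⟨m, hm⟩ := Finset.min_of_nonempty h
  rw [minB, hm]
  exact Finset.mem_of_min hm

lemma minB_le {B : Finset ℕ} {i : ℕ} (hi : i ∈ B) : minB B ≤ i := by
  obtain ⟨m, hm⟩ := Finset.min_of_nonempty ⟨i, hi⟩
  rw [minB, hm]
  have := Finset.min_le hi
  rw [hm] at this
  exact_mod_cast this

lemma minB_eq_of {B : Finset ℕ} {a : ℕ} (ha : a ∈ B) (h : ∀ i ∈ B, a ≤ i) :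
    minB B = a :=
  le_antisymm (minB_le ha) (h _ (minB_mem ⟨a, ha⟩))

lemma minB_union {B C : Finset ℕ} (hB : B.Nonempty) (h : minB B ≤ minB C) :
    minB (B ∪ C) = minB B := by
  refine minB_eq_of (Finset.mem_union_left _ (minB_mem hB)) ?_
  intro i hi
  rcases Finset.mem_union.1 hi with hiB | hiC
  · exact minB_le hiB
  · exact le_trans h (minB_le hiC)

/-! ### Basic facts about pointed partitions -/

lemma blk_nonempty {π : PPart A} {b : Finset ℕ × ℕ} (hb : b ∈ π.1) : b.1.Nonempty :=
  ⟨b.2, π.2.1 b hb⟩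

lemma blk_pt_mem {π : PPart A} {b : Finset ℕ × ℕ} (hb : b ∈ π.1) : b.2 ∈ b.1 :=
  π.2.1 b hb

lemma blk_disjoint {π : PPart A} {b b' : Finset ℕ × ℕ} (hb : b ∈ π.1) (hb' : b' ∈ π.1)
    (h : b ≠ b') : Disjoint b.1 b'.1 :=
  π.2.2.1 b hb b' hb' h

lemma blk_eq_of_mem {π : PPart A} {b b' : Finset ℕ × ℕ} (hb : b ∈ π.1) (hb' : b' ∈ π.1)
    {i : ℕ} (h : i ∈ b.1) (h' : i ∈ b'.1) : b = b' := by
  by_contra hne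
  exact (Finset.disjoint_left.1 (blk_disjoint hb hb' hne) h) h'

lemma blk_subset {π : PPart A} {b : Finset ℕ × ℕ} (hb : b ∈ π.1) : b.1 ⊆ A := by
  intro i hi
  rw [← π.2.2.2]
  exact Finset.mem_biUnion.2 ⟨b, hb, hi⟩

lemma exists_blk (π : PPart A) {i : ℕ} (hi : i ∈ A) : ∃ b ∈ π.1, i ∈ b.1 := by
  rw [← π.2.2.2] at hi
  simpa using Finset.mem_biUnion.1 hi

lemma minB_blk_mem {π : PPart A} {b : Finset ℕ × ℕ} (hb : b ∈ π.1) : minB b.1 ∈ b.1 :=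
  minB_mem (blk_nonempty hb)

lemma blk_minB_inj {π : PPart A} {b b' : Finset ℕ × ℕ} (hb : b ∈ π.1) (hb' : b' ∈ π.1)
    (h : minB b.1 = minB b'.1) : b = b' :=
  blk_eq_of_mem hb hb' (minB_blk_mem hb) (h ▸ minB_blk_mem hb')

lemma blk_pt_inj {π : PPart A} {b b' : Finset ℕ × ℕ} (hb : b ∈ π.1) (hb' : b' ∈ π.1)
    (h : b.2 = b'.2) : b = b' :=
  blk_eq_of_mem hb hb' (blk_pt_mem hb) (h ▸ blk_pt_mem hb')

lemma ppart_eq_of_subset {π ρ : PPart A} (h : π.1 ⊆ ρ.1) : π = ρ := by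
  refine Subtype.ext (Finset.Subset.antisymm h ?_)
  intro c hc
  obtain ⟨b, hb, hcb⟩ := exists_blk π (blk_subset hc (blk_pt_mem hc))
  rwa [blk_eq_of_mem hc (h hb) (blk_pt_mem hc) hcb]

/-! ### Refinement -/

/-- `Refines y x` : every block of `x` is a union of blocks of `y`, pointed at the point
of one of them. -/
def Refines (y x : PPart A) : Prop :=
  ∀ b ∈ x.1, (∀ c ∈ y.1, c.1 ⊆ b.1 ∨ Disjoint c.1 b.1) ∧
    ∃ c ∈ y.1, c.1 ⊆ b.1 ∧ c.2 = b.2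

lemma refines_refl (y : PPart A) : Refines y y := by
  intro b hb
  refine ⟨fun c hc => ?_, b, hb, subset_rfl, rfl⟩
  rcases em (c = b) with h | h
  · exact Or.inl (h ▸ subset_rfl)
  · exact Or.inr (blk_disjoint hc hb h)

lemma refines_block_sub {y x : PPart A} (h : Refines y x) {b c : Finset ℕ × ℕ}
    (hb : b ∈ x.1) (hc : c ∈ y.1) {i : ℕ} (hib : i ∈ b.1) (hic : i ∈ c.1) : c.1 ⊆ b.1 := by
  rcases (h b hb).1 c hc with h' | h'
  · exact h'
  · exact absurd hib (Finset.disjoint_left.1 h' hic)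

lemma refines_cover {y x : PPart A} (h : Refines y x) {b : Finset ℕ × ℕ} (hb : b ∈ x.1)
    {i : ℕ} (hi : i ∈ b.1) : ∃ c ∈ y.1, c.1 ⊆ b.1 ∧ i ∈ c.1 := by
  obtain ⟨c, hc, hic⟩ := exists_blk y (blk_subset hb hi)
  exact ⟨c, hc, refines_block_sub h hb hc hi hic, hic⟩

/-! ### Cover decomposition -/

lemma cov_decomp {z x : PPart A} (h : covPP z x) :
    ∃ b1 b2 : Finset ℕ × ℕ, ∃ p : ℕ,
      b1 ∈ z.1 ∧ b2 ∈ z.1 ∧ minB b1.1 < minB b2.1 ∧ (p = b1.2 ∨ p = b2.2) ∧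
      (b1.1 ∪ b2.1, p) ∈ x.1 ∧ (b1.1 ∪ b2.1, p) ∉ z.1 ∧ b1 ∉ x.1 ∧ b2 ∉ x.1 ∧
      z.1 = insert b1 (insert b2 (x.1.erase (b1.1 ∪ b2.1, p))) := by
  obtain ⟨b1, hb1, b2, hb2, hlt, p, hp, heq⟩ := h
  have hne : b1 ≠ b2 := by rintro rfl; exact lt_irrefl _ hlt
  have hdisj : Disjoint b1.1 b2.1 := blk_disjoint hb1 hb2 hne
  have hm1 : minB b1.1 ∈ b1.1 := minB_blk_mem hb1
  have hm2 : minB b2.1 ∈ b2.1 := minB_blk_mem hb2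
  have h21 : minB b2.1 ∉ b1.1 := fun hx => (Finset.disjoint_left.1 hdisj hx) hm2
  have h12 : minB b1.1 ∉ b2.1 := fun hx => (Finset.disjoint_left.1 hdisj hm1) hx
  have hMne1 : (b1.1 ∪ b2.1, p) ≠ b1 := by
    intro hE
    have hE' : b1.1 ∪ b2.1 = b1.1 := congrArg Prod.fst hE
    exact h21 (hE' ▸ Finset.mem_union_right _ hm2)
  have hMne2 : (b1.1 ∪ b2.1, p) ≠ b2 := by
    intro hE
    have hE' : b1.1 ∪ b2.1 = b2.1 := congrArg Prod.fst hE
    exact h12 (hE' ▸ Finset.mem_union_left _ hm1)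
  have hMx : (b1.1 ∪ b2.1, p) ∈ x.1 := heq ▸ Finset.mem_insert_self _ _
  have hMz : (b1.1 ∪ b2.1, p) ∉ z.1 := by
    intro hM
    have hd := blk_disjoint hM hb1 hMne1
    exact (Finset.disjoint_left.1 hd (Finset.mem_union_left _ hm1)) hm1
  have hb1x : b1 ∉ x.1 := by
    intro hb
    have hd := blk_disjoint (π := x) hb hMx (fun hE => hMne1 hE.symm)
    exact (Finset.disjoint_left.1 hd hm1) (Finset.mem_union_left _ hm1)
  have hb2x : b2 ∉ x.1 := by
    intro hb
    have hd := blk_disjoint (π := x) hb hMx (fun hE => hMne2 hE.symm)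
    exact (Finset.disjoint_left.1 hd hm2) (Finset.mem_union_right _ hm2)
  have hMz' : (b1.1 ∪ b2.1, p) ∉ (z.1.erase b1).erase b2 :=
    fun hM => hMz (Finset.mem_of_mem_erase (Finset.mem_of_mem_erase hM))
  have herase : x.1.erase (b1.1 ∪ b2.1, p) = (z.1.erase b1).erase b2 := by
    rw [heq, Finset.erase_insert hMz']
  have hzeq : z.1 = insert b1 (insert b2 (x.1.erase (b1.1 ∪ b2.1, p))) := by
    rw [herase, Finset.insert_erase (Finset.mem_erase.2 ⟨Ne.symm hne, hb2⟩),
      Finset.insert_erase hb1]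
  exact ⟨b1, b2, p, hb1, hb2, hlt, hp, hMx, hMz, hb1x, hb2x, hzeq⟩

lemma cov_of_split {z x : PPart A} {b1 b2 : Finset ℕ × ℕ} {p : ℕ}
    (hb1 : b1 ∈ z.1) (hb2 : b2 ∈ z.1) (hlt : minB b1.1 < minB b2.1)
    (hp : p = b1.2 ∨ p = b2.2)
    (hzeq : z.1 = insert b1 (insert b2 (x.1.erase (b1.1 ∪ b2.1, p))))
    (hb1x : b1 ∉ x.1) (hb2x : b2 ∉ x.1)
    (hMx : (b1.1 ∪ b2.1, p) ∈ x.1) : covPP z x := by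
  have hne : b1 ≠ b2 := by rintro rfl; exact lt_irrefl _ hlt
  refine ⟨b1, hb1, b2, hb2, hlt, p, hp, ?_⟩
  have h0 : b1 ∉ insert b2 (x.1.erase (b1.1 ∪ b2.1, p)) := by
    intro hc
    rcases Finset.mem_insert.1 hc with h | h
    · exact hne h
    · exact hb1x (Finset.mem_of_mem_erase h)
  have h1 : z.1.erase b1 = insert b2 (x.1.erase (b1.1 ∪ b2.1, p)) := by
    rw [hzeq, Finset.erase_insert h0]
  have h2 : (z.1.erase b1).erase b2 = x.1.erase (b1.1 ∪ b2.1, p) := by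
    rw [h1, Finset.erase_insert (fun hc => hb2x (Finset.mem_of_mem_erase hc))]
  rw [h2, Finset.insert_erase hMx]

lemma cov_label {z x : PPart A} {b1 b2 : Finset ℕ × ℕ} {p : ℕ}
    (hb1 : b1 ∈ z.1) (hb2 : b2 ∈ z.1) (hlt : minB b1.1 < minB b2.1)
    (hMx : (b1.1 ∪ b2.1, p) ∈ x.1) (hMz : (b1.1 ∪ b2.1, p) ∉ z.1)
    (hb1x : b1 ∉ x.1) (hb2x : b2 ∉ x.1)
    (hzeq : z.1 = insert b1 (insert b2 (x.1.erase (b1.1 ∪ b2.1, p)))) :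
    labPP z x = (minB b1.1, minB b2.1, if p = b1.2 then true else false) := by
  have hne : b1 ≠ b2 := by rintro rfl; exact lt_irrefl _ hlt
  have holds : z.1 \ x.1 = {b1, b2} := by
    ext w
    simp only [Finset.mem_sdiff, Finset.mem_insert, Finset.mem_singleton]
    constructor
    · rintro ⟨hwz, hwx⟩
      rw [hzeq] at hwz
      rcases Finset.mem_insert.1 hwz with h | h
      · exact Or.inl h
      rcases Finset.mem_insert.1 h with h | h
      · exact Or.inr h
      · exact absurd (Finset.mem_of_mem_erase h) hwx
    · rintro (rfl | rfl)
      · exact ⟨hb1, hb1x⟩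
      · exact ⟨hb2, hb2x⟩
  have hnews : x.1 \ z.1 = {(b1.1 ∪ b2.1, p)} := by
    ext w
    simp only [Finset.mem_sdiff, Finset.mem_singleton]
    constructor
    · rintro ⟨hwx, hwz⟩
      by_contra hw
      apply hwz
      rw [hzeq]
      exact Finset.mem_insert_of_mem
        (Finset.mem_insert_of_mem (Finset.mem_erase.2 ⟨hw, hwx⟩))
    · rintro rfl
      exact ⟨hMx, hMz⟩
  have hmins : (z.1 \ x.1).image (fun b => minB b.1) = {minB b1.1, minB b2.1} := by
    rw [holds]
    rw [Finset.image_insert, Finset.image_singleton]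
  have hminv : ({minB b1.1, minB b2.1} : Finset ℕ).min.untopD 0 = minB b1.1 := by
    rw [Finset.min_insert, Finset.min_singleton]
    rw [← WithTop.coe_min, min_eq_left hlt.le, WithTop.untopD_coe]
  have hmaxv : ({minB b1.1, minB b2.1} : Finset ℕ).max.unbotD 0 = minB b2.1 := by
    rw [Finset.max_insert, Finset.max_singleton]
    rw [← WithBot.coe_max, max_eq_right hlt.le, WithBot.unbotD_coe]
  have hcond : (∃ b ∈ z.1 \ x.1, minB b.1 = minB b1.1 ∧
      ∃ d ∈ x.1 \ z.1, d.2 = b.2) ↔ p = b1.2 := by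
    rw [holds, hnews]
    constructor
    · rintro ⟨b, hb, hbmin, d, hd, hdb⟩
      rcases Finset.mem_insert.1 hb with rfl | hb
      · rw [Finset.mem_singleton] at hd
        subst hd
        exact hdb
      · rw [Finset.mem_singleton] at hb
        subst hb
        exact absurd hbmin (ne_of_gt hlt)
    · intro hpb
      exact ⟨b1, Finset.mem_insert_self _ _, rfl,
        (b1.1 ∪ b2.1, p), Finset.mem_singleton_self _, hpb⟩
  simp only [labPP, hmins, hminv, hmaxv]
  refine Prod.ext rfl (Prod.ext rfl ?_)
  simp only [hmins, hminv] at hcond ⊢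
  by_cases hc : p = b1.2
  · rw [if_pos (hcond.2 hc), if_pos hc]
  · rw [if_neg (fun h => hc (hcond.1 h)), if_neg hc]

/-! ### The canonical step -/

/-- `CanStep y x z`: `z` is the canonical co-atom step below `x` in the interval `[y, x]`:
the block `(T, t)` of `x` of largest minimum among those that are not blocks of `y` is
split into the `y`-block `D` and the rest. -/
def CanStep (y x z : PPart A) : Prop :=
  ∃ T : Finset ℕ, ∃ t : ℕ, ∃ D : Finset ℕ × ℕ, ∃ p : ℕ,
    (T, t) ∈ x.1 ∧ (T, t) ∉ y.1 ∧
    (∀ b ∈ x.1, b ∉ y.1 → minB b.1 ≤ minB T) ∧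
    D ∈ y.1 ∧ D.1 ⊆ T ∧ minB T ∉ D.1 ∧
    z.1 = insert (T \ D.1, p) (insert D (x.1.erase (T, t))) ∧
    ((t ∉ D.1 ∧ p = t ∧
        ∀ c ∈ y.1, c.1 ⊆ T → minB T ∉ c.1 → t ∉ c.1 → minB c.1 ≤ minB D.1) ∨
     (D.2 = t ∧ (T \ D.1, p) ∈ y.1 ∧
        ∀ c ∈ y.1, c.1 ⊆ T → minB T ∉ c.1 → t ∉ c.1 → False))

lemma mem_insert2 {α : Type*} [DecidableEq α] {s : Finset α} {a b w : α}
    (hw : w ∈ insert a (insert b s)) : w = a ∨ w = b ∨ w ∈ s := by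
  rcases Finset.mem_insert.1 hw with h | hw
  · exact Or.inl h
  rcases Finset.mem_insert.1 hw with h | hw
  · exact Or.inr (Or.inl h)
  · exact Or.inr (Or.inr hw)

lemma build_split (x : PPart A) {T : Finset ℕ} {t : ℕ} {D : Finset ℕ × ℕ} (p : ℕ)
    (hTx : (T, t) ∈ x.1) (hDsub : D.1 ⊆ T)
    (hpmem : p ∈ T \ D.1) (hD2 : D.2 ∈ D.1) :
    ∃ z : PPart A, z.1 = insert (T \ D.1, p) (insert D (x.1.erase (T, t))) := by
  classical
  refine ⟨⟨insert (T \ D.1, p) (insert D (x.1.erase (T, t))), ?_, ?_, ?_⟩, rfl⟩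
  · intro b hb
    rcases mem_insert2 hb with hbe | hbe | hbe
    · rw [hbe]; exact hpmem
    · rw [hbe]; exact hD2
    · exact x.2.1 b (Finset.mem_of_mem_erase hbe)
  · intro b hb b' hb' hne
    have key : ∀ w ∈ x.1.erase (T, t), Disjoint w.1 T := by
      intro w hw
      exact blk_disjoint (Finset.mem_of_mem_erase hw) hTx (Finset.mem_erase.1 hw).1
    have hLD : Disjoint (T \ D.1) D.1 :=
      Finset.disjoint_left.2 (by intro a ha; exact (Finset.mem_sdiff.1 ha).2)
    have hLsub : T \ D.1 ⊆ T := Finset.sdiff_subset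
    rcases mem_insert2 hb with hbe | hbe | hbe <;>
      rcases mem_insert2 hb' with hb'e | hb'e | hb'e
    · exact absurd (hbe.trans hb'e.symm) hne
    · rw [hbe, hb'e]; exact hLD
    · rw [hbe]; exact Finset.disjoint_of_subset_left hLsub (key b' hb'e).symm
    · rw [hbe, hb'e]; exact hLD.symm
    · exact absurd (hbe.trans hb'e.symm) hne
    · rw [hbe]; exact Finset.disjoint_of_subset_left hDsub (key b' hb'e).symm
    · rw [hb'e]; exact Finset.disjoint_of_subset_right hLsub (key b hbe)
    · rw [hb'e]; exact Finset.disjoint_of_subset_right hDsub (key b hbe)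
    · exact blk_disjoint (Finset.mem_of_mem_erase hbe) (Finset.mem_of_mem_erase hb'e) hne
  · ext i
    simp only [Finset.mem_biUnion]
    constructor
    · rintro ⟨b, hb, hib⟩
      rcases mem_insert2 hb with hbe | hbe | hbe
      · rw [hbe] at hib; exact blk_subset hTx (Finset.mem_sdiff.1 hib).1
      · rw [hbe] at hib; exact blk_subset hTx (hDsub hib)
      · exact blk_subset (Finset.mem_of_mem_erase hbe) hib
    · intro hi
      obtain ⟨b, hb, hib⟩ := exists_blk x hi
      rcases em (b = (T, t)) with hbe | hbne
      · rw [hbe] at hib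
        rcases em (i ∈ D.1) with hiD | hiD
        · exact ⟨D, Finset.mem_insert_of_mem (Finset.mem_insert_self _ _), hiD⟩
        · exact ⟨(T \ D.1, p), Finset.mem_insert_self _ _, Finset.mem_sdiff.2 ⟨hib, hiD⟩⟩
      · exact ⟨b, Finset.mem_insert_of_mem (Finset.mem_insert_of_mem
          (Finset.mem_erase.2 ⟨hbne, hb⟩)), hib⟩

lemma canStep_main {y x z : PPart A} (hr : Refines y x)
    {T : Finset ℕ} {t : ℕ} {D : Finset ℕ × ℕ} {p : ℕ}
    (hTx : (T, t) ∈ x.1) (hDy : D ∈ y.1) (hDsub : D.1 ⊆ T) (hAD : minB T ∉ D.1)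
    (hzeq : z.1 = insert (T \ D.1, p) (insert D (x.1.erase (T, t))))
    (hcase : (t ∉ D.1 ∧ p = t) ∨ (D.2 = t ∧ (T \ D.1, p) ∈ y.1)) :
    covPP z x ∧ Refines y z ∧
      labPP z x = (minB T, minB D.1, if t = p then true else false) ∧
      (T \ D.1, p) ∈ z.1 ∧ D ∈ z.1 ∧ minB (T \ D.1) = minB T ∧ minB T < minB D.1 := by
  have hTA : minB T ∈ T := minB_blk_mem hTx
  have hDne : D.1.Nonempty := blk_nonempty hDy
  have hminL : minB (T \ D.1) = minB T := by
    refine minB_eq_of (Finset.mem_sdiff.2 ⟨hTA, hAD⟩) ?_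
    intro i hi
    exact minB_le (Finset.mem_sdiff.1 hi).1
  have hltTD : minB T < minB D.1 :=
    lt_of_le_of_ne (minB_le (hDsub (minB_mem hDne)))
      (fun hE => hAD (hE ▸ minB_mem hDne))
  have hLD : (T \ D.1) ∪ D.1 = T := Finset.sdiff_union_of_subset hDsub
  have hb1z : (T \ D.1, p) ∈ z.1 := hzeq ▸ Finset.mem_insert_self _ _
  have hb2z : D ∈ z.1 := hzeq ▸ Finset.mem_insert_of_mem (Finset.mem_insert_self _ _)
  have hlt' : minB (T \ D.1, p).1 < minB D.1 := by
    show minB (T \ D.1) < minB D.1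
    rw [hminL]; exact hltTD
  have hLneT : T \ D.1 ≠ T := by
    intro hE
    exact (Finset.mem_sdiff.1 (hE ▸ hDsub (minB_mem hDne))).2 (minB_mem hDne)
  have hDneT : D.1 ≠ T := fun hE => hAD (hE ▸ hTA)
  have hb1x : (T \ D.1, p) ∉ x.1 := by
    intro hb
    have hne : ((T \ D.1, p) : Finset ℕ × ℕ) ≠ (T, t) := by
      intro hE; exact hLneT (congrArg Prod.fst hE)
    have hd := blk_disjoint hb hTx hne
    exact (Finset.disjoint_left.1 hd (Finset.mem_sdiff.2 ⟨hTA, hAD⟩)) hTA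
  have hb2x : D ∉ x.1 := by
    intro hb
    have hne : D ≠ (T, t) := by intro hE; exact hDneT (congrArg Prod.fst hE)
    have hd := blk_disjoint hb hTx hne
    exact (Finset.disjoint_left.1 hd (minB_mem hDne)) (hDsub (minB_mem hDne))
  have hMx : ((T \ D.1, p).1 ∪ D.1, t) ∈ x.1 := by
    show (T \ D.1 ∪ D.1, t) ∈ x.1
    rw [hLD]; exact hTx
  have hMz : ((T \ D.1, p).1 ∪ D.1, t) ∉ z.1 := by
    show (T \ D.1 ∪ D.1, t) ∉ z.1
    rw [hLD, hzeq]
    intro hM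
    rcases mem_insert2 hM with h | h | h
    · exact hLneT (congrArg Prod.fst h).symm
    · exact hDneT (congrArg Prod.fst h).symm
    · exact (Finset.mem_erase.1 h).1 rfl
  have hzeq' : z.1 = insert (T \ D.1, p)
      (insert D (x.1.erase ((T \ D.1, p).1 ∪ D.1, t))) := by
    show z.1 = insert (T \ D.1, p) (insert D (x.1.erase (T \ D.1 ∪ D.1, t)))
    rw [hLD]; exact hzeq
  have hp' : t = (T \ D.1, p).2 ∨ t = D.2 := by
    rcases hcase with ⟨_, hpt⟩ | ⟨hD2, _⟩
    · exact Or.inl hpt.symm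
    · exact Or.inr hD2.symm
  have hcov : covPP z x := cov_of_split hb1z hb2z hlt' hp' hzeq' hb1x hb2x hMx
  have hlab := cov_label hb1z hb2z hlt' hMx hMz hb1x hb2x hzeq'
  have href : Refines y z := by
    intro b hb
    rw [hzeq] at hb
    rcases mem_insert2 hb with hbe | hbe | hbe
    · rw [hbe]
      constructor
      · intro c hc
        rcases (hr _ hTx).1 c hc with hsub | hdisj
        · rcases em (c = D) with hcD | hcD
          · rw [hcD]
            refine Or.inr (Finset.disjoint_left.2 ?_).symm
            intro a ha hA
            exact (Finset.mem_sdiff.1 ha).2 hA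
          · refine Or.inl ?_
            intro i hi
            exact Finset.mem_sdiff.2 ⟨hsub hi,
              fun hiD => (Finset.disjoint_left.1 (blk_disjoint hc hDy hcD) hi) hiD⟩
        · exact Or.inr (Finset.disjoint_of_subset_right Finset.sdiff_subset hdisj)
      · rcases hcase with ⟨htD, hpt⟩ | ⟨hD2, hLy⟩
        · obtain ⟨c, hc, hcsub, hc2⟩ := (hr _ hTx).2
          have hcD : c ≠ D := by
            intro hE
            have h1 : c.2 ∈ D.1 := by rw [← hE]; exact blk_pt_mem hc
            rw [hc2] at h1
            exact htD h1
          refine ⟨c, hc, ?_, by rw [hc2]; exact hpt.symm⟩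
          intro i hi
          exact Finset.mem_sdiff.2 ⟨hcsub hi,
            fun hiD => (Finset.disjoint_left.1 (blk_disjoint hc hDy hcD) hi) hiD⟩
        · exact ⟨(T \ D.1, p), hLy, subset_rfl, rfl⟩
    · rw [hbe]
      constructor
      · intro c hc
        rcases em (c = D) with hcD | hcD
        · rw [hcD]; exact Or.inl subset_rfl
        · exact Or.inr (blk_disjoint hc hDy hcD)
      · exact ⟨D, hDy, subset_rfl, rfl⟩
    · exact hr b (Finset.mem_of_mem_erase hbe)
  rw [hminL] at hlab
  exact ⟨hcov, href, hlab, hb1z, hb2z, hminL, hltTD⟩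

lemma canStep_exists {y x : PPart A} (hr : Refines y x) (hne : x ≠ y) :
    ∃ z : PPart A, CanStep y x z := by
  classical
  have hS : (x.1.filter (fun b => b ∉ y.1)).Nonempty := by
    rw [Finset.filter_nonempty_iff]
    by_contra hA
    push_neg at hA
    exact hne (ppart_eq_of_subset hA)
  obtain ⟨Tb, hTbS, hTmax'⟩ := Finset.exists_max_image _ (fun b => minB b.1) hS
  have hTx : Tb ∈ x.1 := (Finset.mem_filter.1 hTbS).1
  have hTy : Tb ∉ y.1 := (Finset.mem_filter.1 hTbS).2
  have hTmax : ∀ b ∈ x.1, b ∉ y.1 → minB b.1 ≤ minB Tb.1 := by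
    intro b hb hby
    exact hTmax' b (Finset.mem_filter.2 ⟨hb, hby⟩)
  obtain ⟨Cb, hCy, hCsub, hC2⟩ := (hr _ hTx).2
  obtain ⟨B1, hB1y, hB1sub, hB1min⟩ := refines_cover hr hTx (minB_blk_mem hTx)
  by_cases hK : ∃ c ∈ y.1, c.1 ⊆ Tb.1 ∧ minB Tb.1 ∉ c.1 ∧ Tb.2 ∉ c.1
  · -- Case 1
    have hKne : (y.1.filter
        (fun c => c.1 ⊆ Tb.1 ∧ minB Tb.1 ∉ c.1 ∧ Tb.2 ∉ c.1)).Nonempty := by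
      obtain ⟨c, hc, h1, h2, h3⟩ := hK
      exact ⟨c, Finset.mem_filter.2 ⟨hc, h1, h2, h3⟩⟩
    obtain ⟨D, hDS, hDmax'⟩ := Finset.exists_max_image _ (fun b => minB b.1) hKne
    obtain ⟨hDy, hDsub, hAD, htD⟩ := Finset.mem_filter.1 hDS
    obtain ⟨z, hz⟩ := build_split x Tb.2 (by rwa [Prod.mk.eta]) hDsub
      (Finset.mem_sdiff.2 ⟨blk_pt_mem hTx, htD⟩) (blk_pt_mem hDy)
    refine ⟨z, Tb.1, Tb.2, D, Tb.2, by rwa [Prod.mk.eta], by rwa [Prod.mk.eta], ?_, hDy,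
      hDsub, hAD, hz, Or.inl ⟨htD, rfl, ?_⟩⟩
    · intro b hb hby; exact hTmax b hb hby
    · intro c hc h1 h2 h3
      exact hDmax' c (Finset.mem_filter.2 ⟨hc, h1, h2, h3⟩)
  · -- Case 2
    push_neg at hK
    have htC : Tb.2 ∈ Cb.1 := by rw [← hC2]; exact blk_pt_mem hCy
    have hCB1 : Cb ≠ B1 := by
      intro hE
      apply hTy
      have hTB : Tb.1 = Cb.1 := by
        apply Finset.Subset.antisymm _ hCsub
        intro i hi
        obtain ⟨c, hc, hcsub, hic⟩ := refines_cover hr hTx hi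
        rcases em (minB Tb.1 ∈ c.1) with hA | hA
        · have hcC : c = Cb := by rw [hE]; exact blk_eq_of_mem hc hB1y hA hB1min
          rwa [hcC] at hic
        · have ht := hK c hc hcsub hA
          rwa [blk_eq_of_mem hc hCy ht htC] at hic
      have hTbe : Tb = Cb := Prod.ext hTB hC2.symm
      rw [hTbe]; exact hCy
    have hACb : minB Tb.1 ∉ Cb.1 := by
      intro hA
      exact hCB1 (blk_eq_of_mem hCy hB1y hA hB1min)
    have hTC : Tb.1 \ Cb.1 = B1.1 := by
      apply Finset.Subset.antisymm
      · intro i hi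
        obtain ⟨hiT, hiC⟩ := Finset.mem_sdiff.1 hi
        obtain ⟨c, hc, hcsub, hic⟩ := refines_cover hr hTx hiT
        rcases em (minB Tb.1 ∈ c.1) with hA | hA
        · rwa [blk_eq_of_mem hc hB1y hA hB1min] at hic
        · have ht := hK c hc hcsub hA
          rw [blk_eq_of_mem hc hCy ht htC] at hic
          exact absurd hic hiC
      · intro i hi
        refine Finset.mem_sdiff.2 ⟨hB1sub hi, fun hiC => ?_⟩
        exact hCB1 (blk_eq_of_mem hCy hB1y hiC hi)
    obtain ⟨z, hz⟩ := build_split x B1.2 (by rwa [Prod.mk.eta]) hCsub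
      (by rw [hTC]; exact blk_pt_mem hB1y) (blk_pt_mem hCy)
    refine ⟨z, Tb.1, Tb.2, Cb, B1.2, by rwa [Prod.mk.eta], by rwa [Prod.mk.eta], ?_, hCy,
      hCsub, hACb, hz, Or.inr ⟨hC2, ?_, ?_⟩⟩
    · intro b hb hby; exact hTmax b hb hby
    · rw [hTC, Prod.mk.eta]; exact hB1y
    · intro c hc h1 h2 h3
      exact h3 (hK c hc h1 h2)

/-! ### Order-theoretic lemmas -/

lemma ref_step {y z x : PPart A} (hc : covPP z x) (hrz : Refines y z) : Refines y x := by
  obtain ⟨b1, b2, p, hb1, hb2, hlt, hp, hMx, hMz, hb1x, hb2x, hzeq⟩ := cov_decomp hc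
  intro b hb
  rcases em (b = (b1.1 ∪ b2.1, p)) with hbe | hbe
  · constructor
    · intro c hc'
      rcases (hrz _ hb1).1 c hc' with h1 | h1
      · refine Or.inl ?_; rw [hbe]; exact h1.trans Finset.subset_union_left
      rcases (hrz _ hb2).1 c hc' with h2 | h2
      · refine Or.inl ?_; rw [hbe]; exact h2.trans Finset.subset_union_right
      · refine Or.inr ?_; rw [hbe]
        exact Finset.disjoint_union_right.2 ⟨h1, h2⟩
    · rcases hp with hp | hp
      · obtain ⟨c, hc', hsub, hc2⟩ := (hrz _ hb1).2
        refine ⟨c, hc', ?_, ?_⟩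
        · rw [hbe]; exact hsub.trans Finset.subset_union_left
        · rw [hbe]; exact hc2.trans hp.symm
      · obtain ⟨c, hc', hsub, hc2⟩ := (hrz _ hb2).2
        refine ⟨c, hc', ?_, ?_⟩
        · rw [hbe]; exact hsub.trans Finset.subset_union_right
        · rw [hbe]; exact hc2.trans hp.symm
  · have hbz : b ∈ z.1 := by
      rw [hzeq]
      exact Finset.mem_insert_of_mem
        (Finset.mem_insert_of_mem (Finset.mem_erase.2 ⟨hbe, hb⟩))
    exact hrz b hbz

lemma ref_of_le {x y : PPart A}
    (h : Relation.ReflTransGen (fun a b : PPart A => covPP b a) x y) : Refines y x := by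
  induction h using Relation.ReflTransGen.head_induction_on with
  | refl => exact refines_refl y
  | head hab _ ih => exact ref_step hab ih

lemma ref_choice {y x : PPart A} (hr : Refines y x) :
    ∃ f : Finset ℕ × ℕ → Finset ℕ × ℕ,
      ∀ b ∈ x.1, f b ∈ y.1 ∧ (f b).1 ⊆ b.1 ∧ (f b).2 = b.2 := by
  classical
  have hch : ∀ b : Finset ℕ × ℕ, ∃ c,
      b ∈ x.1 → c ∈ y.1 ∧ c.1 ⊆ b.1 ∧ c.2 = b.2 := by
    intro b
    rcases em (b ∈ x.1) with hb | hb
    · obtain ⟨c, h1, h2, h3⟩ := (hr b hb).2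
      exact ⟨c, fun _ => ⟨h1, h2, h3⟩⟩
    · exact ⟨b, fun h => absurd h hb⟩
  choose f hf using hch
  exact ⟨f, fun b hb => hf b hb⟩

lemma ref_inj {y x : PPart A} (hr : Refines y x) {f : Finset ℕ × ℕ → Finset ℕ × ℕ}
    (hf : ∀ b ∈ x.1, f b ∈ y.1 ∧ (f b).1 ⊆ b.1 ∧ (f b).2 = b.2)
    {b b' : Finset ℕ × ℕ} (hb : b ∈ x.1) (hb' : b' ∈ x.1) (hE : f b = f b') : b = b' := by
  have h1 := hf b hb
  have h2 := hf b' hb'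
  refine blk_eq_of_mem hb hb' (h1.2.1 (blk_pt_mem h1.1)) ?_
  rw [hE]
  exact h2.2.1 (blk_pt_mem h2.1)

lemma ref_card {y x : PPart A} (hr : Refines y x) : x.1.card ≤ y.1.card := by
  obtain ⟨f, hf⟩ := ref_choice hr
  apply Finset.card_le_card_of_injOn f (fun b hb => (hf b hb).1)
  intro b hb b' hb' hE
  exact ref_inj hr hf (Finset.mem_coe.1 hb) (Finset.mem_coe.1 hb') hE

lemma ref_eq_of_card {y x : PPart A} (hr : Refines y x) (hcard : y.1.card ≤ x.1.card) :
    x = y := by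
  classical
  obtain ⟨f, hf⟩ := ref_choice hr
  have hinj : Set.InjOn f ↑x.1 := fun b hb b' hb' hE =>
    ref_inj hr hf (Finset.mem_coe.1 hb) (Finset.mem_coe.1 hb') hE
  have himage : x.1.image f = y.1 := by
    apply Finset.eq_of_subset_of_card_le
    · intro c hc
      obtain ⟨b, hb, rfl⟩ := Finset.mem_image.1 hc
      exact (hf b hb).1
    · rw [Finset.card_image_of_injOn hinj]
      exact hcard
  apply ppart_eq_of_subset
  intro b hb
  have hfb := hf b hb
  have hbeq : b = f b := by
    have hsub : b.1 ⊆ (f b).1 := by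
      intro i hi
      obtain ⟨c, hc, hcsub, hic⟩ := refines_cover hr hb hi
      have : c ∈ x.1.image f := himage.symm ▸ hc
      obtain ⟨b'', hb'', hb''e⟩ := Finset.mem_image.1 this
      have hcb'' : c.1 ⊆ b''.1 := by rw [← hb''e]; exact (hf b'' hb'').2.1
      have : b = b'' := blk_eq_of_mem hb hb'' (hcsub (blk_pt_mem hc)) (hcb'' (blk_pt_mem hc))
      rw [this, hb''e]
      exact hic
    exact Prod.ext (Finset.Subset.antisymm hsub hfb.2.1) hfb.2.2.symm
  rw [hbeq]
  exact hfb.1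

lemma cov_card {z x : PPart A} (h : covPP z x) : z.1.card = x.1.card + 1 := by
  obtain ⟨b1, b2, p, hb1, hb2, hlt, hp, hMx, hMz, hb1x, hb2x, hzeq⟩ := cov_decomp h
  have hne : b1 ≠ b2 := by rintro rfl; exact lt_irrefl _ hlt
  have h2 : b2 ∉ x.1.erase (b1.1 ∪ b2.1, p) :=
    fun hc => hb2x (Finset.mem_of_mem_erase hc)
  have h1 : b1 ∉ insert b2 (x.1.erase (b1.1 ∪ b2.1, p)) := by
    intro hc
    rcases Finset.mem_insert.1 hc with h | h
    · exact hne h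
    · exact hb1x (Finset.mem_of_mem_erase h)
  rw [hzeq, Finset.card_insert_of_notMem h1, Finset.card_insert_of_notMem h2,
    Finset.card_erase_of_mem hMx]
  have : 1 ≤ x.1.card := Finset.card_pos.2 ⟨_, hMx⟩
  omega

/-! ### Chain lemmas -/

lemma satChain_le {α : Type*} {r : α → α → Prop} :
    ∀ (c : List α) (x y : α), IsSatChain r x y c → Relation.ReflTransGen r x y := by
  intro c
  induction c with
  | nil => intro x y h; exact absurd h.2.1 (by simp)
  | cons a rest ih =>
    intro x y h
    obtain ⟨hch, hhead, hlast⟩ := h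
    have hax : a = x := by simpa using hhead
    subst hax
    cases rest with
    | nil =>
      have : a = y := by simpa using hlast
      rw [this]
    | cons b rest' =>
      have hab : r a b := (List.isChain_cons_cons.1 hch).1
      have htail : IsSatChain r b y (b :: rest') :=
        ⟨(List.isChain_cons_cons.1 hch).2, rfl, by rwa [List.getLast?_cons_cons] at hlast⟩
      exact Relation.ReflTransGen.head hab (ih b y htail)

lemma satChain_cons {α : Type*} {r : α → α → Prop} {x z y : α} {rest : List α}
    (h : IsSatChain r x y (x :: z :: rest)) : r x z ∧ IsSatChain r z y (z :: rest) := by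
  obtain ⟨hch, _, hlast⟩ := h
  exact ⟨(List.isChain_cons_cons.1 hch).1, (List.isChain_cons_cons.1 hch).2, rfl,
    by rwa [List.getLast?_cons_cons] at hlast⟩

lemma satChain_shape {α : Type*} {r : α → α → Prop} {x y : α} {c : List α}
    (h : IsSatChain r x y c) : ∃ tail, c = x :: tail := by
  obtain ⟨_, hhead, _⟩ := h
  cases c with
  | nil => simp at hhead
  | cons a tail =>
    have : a = x := by simpa using hhead
    exact ⟨tail, by rw [this]⟩

lemma satChain_self {w : PPart A} {c : List (PPart A)}
    (h : IsSatChain (fun a b : PPart A => covPP b a) w w c) : c = [w] := by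
  obtain ⟨tail, rfl⟩ := satChain_shape h
  cases tail with
  | nil => rfl
  | cons z rest =>
    obtain ⟨hcov, htail⟩ := satChain_cons h
    have hle := satChain_le _ _ _ htail
    have hcard := ref_card (ref_of_le hle)
    have := cov_card hcov
    omega

lemma satChain_single {α : Type*} {r : α → α → Prop} (x : α) :
    IsSatChain r x x [x] := ⟨List.isChain_singleton x, rfl, rfl⟩

lemma wordOf_cons {α L : Type*} (lab : α → α → L) (x z : α) (rest : List α) :
    wordOf lab (x :: z :: rest) = lab x z :: wordOf lab (z :: rest) := rfl

lemma wordOf_single {α L : Type*} (lab : α → α → L) (x : α) :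
    wordOf lab [x] = ([] : List L) := rfl

/-! ### Comparison lemmas -/

lemma left_part {T b1 b2 : Finset ℕ} (hd : Disjoint b1 b2) (hu : b1 ∪ b2 = T) :
    b1 = T \ b2 := by
  ext i
  rw [Finset.mem_sdiff, ← hu, Finset.mem_union]
  constructor
  · intro h
    exact ⟨Or.inl h, Finset.disjoint_left.1 hd h⟩
  · rintro ⟨h | h, h2⟩
    · exact h
    · exact absurd h h2

lemma yblock_eq {y : PPart A} {c d : Finset ℕ × ℕ} (hc : c ∈ y.1) (hd : d ∈ y.1)
    (h : c.1 ⊆ d.1) : c = d :=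
  blk_eq_of_mem hc hd (blk_pt_mem hc) (h (blk_pt_mem hc))

lemma key_lemma {y x x' z : PPart A} (hr : Refines y x) (hcs : CanStep y x x')
    (hcov : covPP z x) (hrz : Refines y z) :
    z = x' ∨ ltLp (labPP z x) (labPP x' x) := by
  classical
  obtain ⟨T, t, D, p, hTx, hTy, hTmax, hDy, hDsub, hAD, hx'eq, hcase⟩ := hcs
  have hcase' : (t ∉ D.1 ∧ p = t) ∨ (D.2 = t ∧ (T \ D.1, p) ∈ y.1) := by
    rcases hcase with ⟨h1, h2, _⟩ | ⟨h1, h2, _⟩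
    exacts [Or.inl ⟨h1, h2⟩, Or.inr ⟨h1, h2⟩]
  obtain ⟨hcovx', hrefx', hlabx', hLz', hDz', hminL, hltTD⟩ :=
    canStep_main hr hTx hDy hDsub hAD hx'eq hcase'
  obtain ⟨b1, b2, pM, hb1, hb2, hlt, hpM, hMx, hMz, hb1x, hb2x, hzeq⟩ := cov_decomp hcov
  have hlabz := cov_label hb1 hb2 hlt hMx hMz hb1x hb2x hzeq
  have hne12 : b1 ≠ b2 := by rintro rfl; exact lt_irrefl _ hlt
  have hd12 : Disjoint b1.1 b2.1 := blk_disjoint hb1 hb2 hne12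
  obtain ⟨c1, hc1y, hc1sub, hc12⟩ := (hrz _ hb1).2
  obtain ⟨c2, hc2y, hc2sub, hc22⟩ := (hrz _ hb2).2
  have hMy : (b1.1 ∪ b2.1, pM) ∉ y.1 := by
    intro hM
    have hne : c1 ≠ (b1.1 ∪ b2.1, pM) := by
      intro hE
      have h1 : b2.2 ∈ c1.1 := by
        rw [hE]; exact Finset.mem_union_right _ (blk_pt_mem hb2)
      exact (Finset.disjoint_left.1 hd12 (hc1sub h1)) (blk_pt_mem hb2)
    have hd := blk_disjoint hc1y hM hne
    exact (Finset.disjoint_left.1 hd (blk_pt_mem hc1y))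
      (Finset.mem_union_left _ (hc1sub (blk_pt_mem hc1y)))
  have hminM : minB (b1.1 ∪ b2.1) = minB b1.1 := minB_union (blk_nonempty hb1) hlt.le
  have hle : minB (b1.1 ∪ b2.1) ≤ minB T := hTmax _ hMx hMy
  rcases lt_or_eq_of_le hle with hML | hME
  · right
    rw [hlabz, hlabx']
    exact Or.inl (by rw [← hminM]; exact hML)
  · -- the split block is (T, t)
    have hMeq : ((b1.1 ∪ b2.1, pM) : Finset ℕ × ℕ) = (T, t) := blk_minB_inj hMx hTx hME
    have hunion : b1.1 ∪ b2.1 = T := congrArg Prod.fst hMeq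
    have hpMt : pM = t := congrArg Prod.snd hMeq
    have hminb1T : minB b1.1 = minB T := hminM.symm.trans hME
    have hAb1 : minB T ∈ b1.1 := hminb1T ▸ minB_blk_mem hb1
    have hb1T : b1.1 ⊆ T := by rw [← hunion]; exact Finset.subset_union_left
    have hb2T : b2.1 ⊆ T := by rw [← hunion]; exact Finset.subset_union_right
    have hAb2 : minB T ∉ b2.1 := fun hA => (Finset.disjoint_left.1 hd12 hAb1) hA
    rcases hcase with ⟨htD, hpt, hmax'⟩ | ⟨hD2, hLy, hK'⟩
    · -- canonical case 1
      rcases em (pM = b1.2) with hu | hu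
      · -- t is in the left part
        have htb1 : t ∈ b1.1 := by rw [← hpMt, hu]; exact blk_pt_mem hb1
        have htb2 : t ∉ b2.1 := fun ht => (Finset.disjoint_left.1 hd12 htb1) ht
        obtain ⟨c, hcy, hcsub, hcmem⟩ := refines_cover hrz hb2 (minB_blk_mem hb2)
        have hminc : minB c.1 = minB b2.1 :=
          le_antisymm (minB_le hcmem) (minB_le (hcsub (minB_mem (blk_nonempty hcy))))
        have hcle : minB b2.1 ≤ minB D.1 := by
          rw [← hminc]
          exact hmax' c hcy (hcsub.trans hb2T)
            (fun hA => hAb2 (hcsub hA)) (fun ht => htb2 (hcsub ht))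
        rcases lt_or_eq_of_le hcle with hclt | hceq
        · right
          rw [hlabz, hlabx', if_pos hu, if_pos hpt.symm]
          exact Or.inr ⟨hminb1T, Or.inr ⟨rfl, rfl, hclt⟩⟩
        · -- z = x'
          left
          have hcD : c = D := blk_minB_inj hcy hDy (hminc.trans hceq)
          have hb2D : b2.1 = D.1 := by
            apply Finset.Subset.antisymm
            · intro i hi
              obtain ⟨c', hc'y, hc'sub, hic'⟩ := refines_cover hrz hb2 hi
              have h1 : minB c'.1 ≤ minB D.1 := hmax' c' hc'y (hc'sub.trans hb2T)
                (fun hA => hAb2 (hc'sub hA)) (fun ht => htb2 (hc'sub ht))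
              have h2 : minB b2.1 ≤ minB c'.1 :=
                minB_le (hc'sub (minB_mem (blk_nonempty hc'y)))
              have hc'D : c' = D := blk_minB_inj hc'y hDy (le_antisymm h1 (hceq ▸ h2))
              rw [← hc'D]
              exact hic'
            · rw [← hcD]
              exact hcsub
          have hb2D2 : b2.2 = D.2 := by
            have hc2D : c2 = D := yblock_eq hc2y hDy (by rw [← hb2D]; exact hc2sub)
            rw [← hc22, hc2D]
          have hb2e : b2 = D := Prod.ext hb2D hb2D2
          have hb1e : b1 = (T \ D.1, p) := by
            refine Prod.ext ?_ ?_
            · rw [← hb2D]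
              exact left_part hd12 hunion
            · rw [← hu, hpMt, hpt]
          apply Subtype.ext
          rw [hzeq, hMeq, hb1e, hb2e, hx'eq]
      · -- label ends with 0 : always smaller
        right
        rw [hlabz, hlabx', if_neg hu, if_pos hpt.symm]
        exact Or.inr ⟨hminb1T, Or.inl ⟨rfl, rfl⟩⟩
    · -- canonical case 2 : the split is forced
      left
      have htD' : t ∈ D.1 := by rw [← hD2]; exact blk_pt_mem hDy
      have hB1mem : minB T ∈ T \ D.1 := Finset.mem_sdiff.2 ⟨minB_blk_mem hTx, hAD⟩
      have hB1b1 : T \ D.1 ⊆ b1.1 := refines_block_sub hrz hb1 hLy hAb1 hB1mem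
      have hblock : ∀ c ∈ y.1, c.1 ⊆ T → c = (T \ D.1, p) ∨ c = D := by
        intro c hcy hcsub
        rcases em (minB T ∈ c.1) with hA | hA
        · exact Or.inl (blk_eq_of_mem hcy hLy hA hB1mem)
        · rcases em (t ∈ c.1) with ht | ht
          · exact Or.inr (blk_eq_of_mem hcy hDy ht htD')
          · exact absurd (hK' c hcy hcsub hA ht) id
      have hDb1 : Disjoint D.1 b1.1 := by
        by_contra hd
        rw [Finset.not_disjoint_iff] at hd
        obtain ⟨j, hjD, hjb1⟩ := hd
        have hDsubb1 : D.1 ⊆ b1.1 := refines_block_sub hrz hb1 hDy hjb1 hjD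
        have hTb1 : T ⊆ b1.1 := by
          intro i hi
          obtain ⟨c, hcy, hcsub, hic⟩ := refines_cover hr hTx hi
          rcases hblock c hcy hcsub with hce | hce
          · rw [hce] at hic
            exact hB1b1 hic
          · rw [hce] at hic
            exact hDsubb1 hic
        obtain ⟨j2, hj2⟩ := blk_nonempty hb2
        exact (Finset.disjoint_left.1 hd12 (hTb1 (hb2T hj2))) hj2
      have hb2D : b2.1 = D.1 := by
        apply Finset.Subset.antisymm
        · intro i hi
          obtain ⟨c, hcy, hcsub, hic⟩ := refines_cover hrz hb2 hi
          rcases hblock c hcy (hcsub.trans hb2T) with hce | hce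
          · have hic' : i ∈ T \ D.1 := by rw [hce] at hic; exact hic
            exact absurd (hB1b1 hic') (Finset.disjoint_left.1 hd12.symm hi)
          · rw [hce] at hic
            exact hic
        · intro i hi
          have hiT : i ∈ T := hDsub hi
          rw [← hunion] at hiT
          rcases Finset.mem_union.1 hiT with h | h
          · exact absurd h (Finset.disjoint_left.1 hDb1 hi)
          · exact h
      have hb2e : b2 = D := by
        refine Prod.ext hb2D ?_
        have hc2D : c2 = D := yblock_eq hc2y hDy (by rw [← hb2D]; exact hc2sub)
        rw [← hc22, hc2D]
      have hb1e : b1 = (T \ D.1, p) := by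
        refine Prod.ext ?_ ?_
        · rw [← hb2D]
          exact left_part hd12 hunion
        · have hc1B1 : c1 = (T \ D.1, p) := by
            refine yblock_eq hc1y hLy ?_
            intro i hi
            have hib1 : i ∈ b1.1 := hc1sub hi
            have hiT : i ∈ T := hb1T hib1
            refine Finset.mem_sdiff.2 ⟨hiT, fun hiD => ?_⟩
            exact (Finset.disjoint_left.1 hDb1 hiD) hib1
          rw [← hc12, hc1B1]
      apply Subtype.ext
      rw [hzeq, hMeq, hb1e, hb2e, hx'eq]

lemma inc_lemma {y x x' x'' : PPart A} (hr : Refines y x) (hcs : CanStep y x x')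
    (hcs2 : CanStep y x' x'') :
    ltLp (labPP x'' x') (labPP x' x) := by
  classical
  obtain ⟨T, t, D, p, hTx, hTy, hTmax, hDy, hDsub, hAD, hx'eq, hcase⟩ := hcs
  have hcase' : (t ∉ D.1 ∧ p = t) ∨ (D.2 = t ∧ (T \ D.1, p) ∈ y.1) := by
    rcases hcase with ⟨h1, h2, _⟩ | ⟨h1, h2, _⟩
    exacts [Or.inl ⟨h1, h2⟩, Or.inr ⟨h1, h2⟩]
  obtain ⟨hcovx', hrefx', hlabx', hLz', hDz', hminL, hltTD⟩ :=
    canStep_main hr hTx hDy hDsub hAD hx'eq hcase'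
  obtain ⟨T₂, t₂, D₂, p₂, hT₂x', hT₂y, hT₂max, hD₂y, hD₂sub, hAD₂, hx''eq, hcase₂⟩ := hcs2
  have hcase₂' : (t₂ ∉ D₂.1 ∧ p₂ = t₂) ∨ (D₂.2 = t₂ ∧ (T₂ \ D₂.1, p₂) ∈ y.1) := by
    rcases hcase₂ with ⟨h1, h2, _⟩ | ⟨h1, h2, _⟩
    exacts [Or.inl ⟨h1, h2⟩, Or.inr ⟨h1, h2⟩]
  obtain ⟨hcovx'', hrefx'', hlabx'', hLz'', hDz'', hminL₂, hltTD₂⟩ :=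
    canStep_main hrefx' hT₂x' hD₂y hD₂sub hAD₂ hx''eq hcase₂'
  rw [hlabx', hlabx'']
  have hT₂mem : (T₂, t₂) ∈ insert (T \ D.1, p) (insert D (x.1.erase (T, t))) := by
    rw [← hx'eq]; exact hT₂x'
  rcases mem_insert2 hT₂mem with hT₂e | hT₂e | hT₂e
  · -- the next split block is the left part of the previous split
    have hT₂1 : T₂ = T \ D.1 := congrArg Prod.fst hT₂e
    have hT₂2 : t₂ = p := congrArg Prod.snd hT₂e
    have hminT₂ : minB T₂ = minB T := by rw [hT₂1]; exact hminL
    rcases hcase with ⟨htD, hpt, hmax'⟩ | ⟨hD2, hLy, hK'⟩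
    · rw [if_pos hpt.symm]
      rcases hcase₂ with ⟨ht₂D₂, hp₂, hmax₂⟩ | ⟨hD₂2, hL₂y, hK₂'⟩
      · rw [if_pos hp₂.symm]
        have hD₂T : D₂.1 ⊆ T := by
          rw [hT₂1] at hD₂sub
          exact hD₂sub.trans Finset.sdiff_subset
        have hAD₂' : minB T ∉ D₂.1 := by rw [← hminT₂]; exact hAD₂
        have htD₂ : t ∉ D₂.1 := by rw [← hpt, ← hT₂2]; exact ht₂D₂
        have hle := hmax' D₂ hD₂y hD₂T hAD₂' htD₂
        have hne : D₂ ≠ D := by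
          intro hE
          rw [hT₂1] at hD₂sub
          have := hD₂sub (minB_mem (blk_nonempty hD₂y))
          rw [hE] at this
          exact (Finset.mem_sdiff.1 this).2 (minB_mem (blk_nonempty hDy))
        have hlt : minB D₂.1 < minB D.1 :=
          lt_of_le_of_ne hle (fun hE => hne (blk_minB_inj hD₂y hDy hE))
        exact Or.inr ⟨hminT₂, Or.inr ⟨rfl, rfl, hlt⟩⟩
      · have hne : t₂ ≠ p₂ := by
          intro hE
          have hL₂D₂ : (T₂ \ D₂.1, p₂) = D₂ :=
            blk_pt_inj hL₂y hD₂y (by show p₂ = D₂.2; rw [hD₂2, hE])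
          have h1 := minB_mem (blk_nonempty hD₂y)
          have hfst : T₂ \ D₂.1 = D₂.1 := congrArg Prod.fst hL₂D₂
          have h2 : minB D₂.1 ∈ T₂ \ D₂.1 := by
            rw [hfst]; exact h1
          exact (Finset.mem_sdiff.1 h2).2 h1
        rw [if_neg hne]
        exact Or.inr ⟨hminT₂, Or.inl ⟨rfl, rfl⟩⟩
    · -- case 2 at x : the left part is a block of y, contradiction
      exact absurd (show (T₂, t₂) ∈ y.1 by rw [hT₂e]; exact hLy) hT₂y
  · exact absurd (show (T₂, t₂) ∈ y.1 by rw [hT₂e]; exact hDy) hT₂y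
  · -- the next split block is an untouched block of x
    have hT₂x : (T₂, t₂) ∈ x.1 := Finset.mem_of_mem_erase hT₂e
    have hle := hTmax _ hT₂x hT₂y
    have hlt : minB T₂ < minB T := by
      refine lt_of_le_of_ne hle (fun hE => ?_)
      exact (Finset.mem_erase.1 hT₂e).1 (blk_minB_inj hT₂x hTx hE)
    exact Or.inl hlt

lemma third_lemma {y x x' z z'' : PPart A} (hr : Refines y x) (hcs : CanStep y x x')
    (hcov : covPP z x) (hrz : Refines y z) (hzx' : z ≠ x') (hcs2 : CanStep y z z'') :
    ¬ ltLp (labPP z'' z) (labPP z x) := by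
  classical
  obtain ⟨T, t, D, p, hTx, hTy, hTmax, hDy, hDsub, hAD, hx'eq, hcase⟩ := hcs
  obtain ⟨b1, b2, pM, hb1, hb2, hlt, hpM, hMx, hMz, hb1x, hb2x, hzeq⟩ := cov_decomp hcov
  have hlabz := cov_label hb1 hb2 hlt hMx hMz hb1x hb2x hzeq
  have hne12 : b1 ≠ b2 := by rintro rfl; exact lt_irrefl _ hlt
  have hd12 : Disjoint b1.1 b2.1 := blk_disjoint hb1 hb2 hne12
  obtain ⟨c1, hc1y, hc1sub, hc12⟩ := (hrz _ hb1).2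
  obtain ⟨c2, hc2y, hc2sub, hc22⟩ := (hrz _ hb2).2
  have hMy : (b1.1 ∪ b2.1, pM) ∉ y.1 := by
    intro hM
    have hne : c1 ≠ (b1.1 ∪ b2.1, pM) := by
      intro hE
      have h1 : b2.2 ∈ c1.1 := by
        rw [hE]; exact Finset.mem_union_right _ (blk_pt_mem hb2)
      exact (Finset.disjoint_left.1 hd12 (hc1sub h1)) (blk_pt_mem hb2)
    have hd := blk_disjoint hc1y hM hne
    exact (Finset.disjoint_left.1 hd (blk_pt_mem hc1y))
      (Finset.mem_union_left _ (hc1sub (blk_pt_mem hc1y)))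
  have hminM : minB (b1.1 ∪ b2.1) = minB b1.1 := minB_union (blk_nonempty hb1) hlt.le
  obtain ⟨T₂, t₂, D₂, p₂, hT₂z, hT₂y, hT₂max, hD₂y, hD₂sub, hAD₂, hz''eq, hcase₂⟩ := hcs2
  have hcase₂' : (t₂ ∉ D₂.1 ∧ p₂ = t₂) ∨ (D₂.2 = t₂ ∧ (T₂ \ D₂.1, p₂) ∈ y.1) := by
    rcases hcase₂ with ⟨h1, h2, _⟩ | ⟨h1, h2, _⟩
    exacts [Or.inl ⟨h1, h2⟩, Or.inr ⟨h1, h2⟩]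
  obtain ⟨hcovz'', hrefz'', hlabz'', hLz'', hDz'', hminL₂, hltTD₂⟩ :=
    canStep_main hrz hT₂z hD₂y hD₂sub hAD₂ hz''eq hcase₂'
  rw [hlabz, hlabz'']
  have hle : minB (b1.1 ∪ b2.1) ≤ minB T := hTmax _ hMx hMy
  rcases lt_or_eq_of_le hle with hML | hME
  · -- the merged block is not (T, t) : (T, t) is still a block of z
    have hTz : (T, t) ∈ z.1 := by
      rw [hzeq]
      refine Finset.mem_insert_of_mem (Finset.mem_insert_of_mem (Finset.mem_erase.2 ⟨?_, hTx⟩))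
      intro hE
      have hfst : T = b1.1 ∪ b2.1 := congrArg Prod.fst hE
      rw [hfst] at hML
      exact lt_irrefl _ hML
    have h1 : minB T ≤ minB T₂ := hT₂max _ hTz hTy
    have h2 : minB b1.1 < minB T₂ := lt_of_lt_of_le (by rw [← hminM]; exact hML) h1
    intro h
    rcases h with h | ⟨heq, _⟩
    · have h' : minB T₂ < minB b1.1 := h
      exact lt_irrefl _ (h'.trans h2)
    · have heq' : minB T₂ = minB b1.1 := heq
      rw [heq'] at h2
      exact lt_irrefl _ h2
  · -- the merged block is (T, t)
    have hMeq : ((b1.1 ∪ b2.1, pM) : Finset ℕ × ℕ) = (T, t) := blk_minB_inj hMx hTx hME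
    have hunion : b1.1 ∪ b2.1 = T := congrArg Prod.fst hMeq
    have hpMt : pM = t := congrArg Prod.snd hMeq
    have hminb1T : minB b1.1 = minB T := hminM.symm.trans hME
    have hAb1 : minB T ∈ b1.1 := hminb1T ▸ minB_blk_mem hb1
    have hb1T : b1.1 ⊆ T := by rw [← hunion]; exact Finset.subset_union_left
    have hb2T : b2.1 ⊆ T := by rw [← hunion]; exact Finset.subset_union_right
    have hAb2 : minB T ∉ b2.1 := fun hA => (Finset.disjoint_left.1 hd12 hAb1) hA
    rcases em (b2 ∈ y.1) with hb2y | hb2y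
    · -- b2 is a block of y
      rcases em (b1 ∈ y.1) with hb1y | hb1y
      · -- both parts are blocks of y : z must be x', contradiction
        exfalso
        apply hzx'
        rcases hcase with ⟨htD, hpt, hmax'⟩ | ⟨hD2, hLy, hK'⟩
        · -- x'-case 1
          have hb2e : b2 = D := by
            rcases (hrz _ hb1).1 D hDy with hsub | hdisj
            · exfalso
              have hDb1 : D = b1 := yblock_eq hDy hb1y hsub
              apply hAD
              rw [hDb1]
              exact hAb1
            · refine (yblock_eq hDy hb2y ?_).symm
              intro i hi
              have hiT : i ∈ T := hDsub hi
              rw [← hunion] at hiT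
              rcases Finset.mem_union.1 hiT with h | h
              · exact absurd h (Finset.disjoint_left.1 hdisj hi)
              · exact h
          have hu : pM = b1.2 := by
            rcases hpM with hu | hu
            · exact hu
            · exfalso
              apply htD
              have hb22 : b2.2 = D.2 := congrArg Prod.snd hb2e
              rw [← hpMt, hu, hb22]
              exact blk_pt_mem hDy
          have hb1e : b1 = (T \ D.1, p) := by
            refine Prod.ext ?_ ?_
            · rw [← congrArg Prod.fst hb2e]
              exact left_part hd12 hunion
            · rw [← hu, hpMt, hpt]
          apply Subtype.ext
          rw [hzeq, hMeq, hb1e, hb2e, hx'eq]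
        · -- x'-case 2
          have htD' : t ∈ D.1 := by rw [← hD2]; exact blk_pt_mem hDy
          have hB1mem : minB T ∈ T \ D.1 := Finset.mem_sdiff.2 ⟨minB_blk_mem hTx, hAD⟩
          have hblock : ∀ c ∈ y.1, c.1 ⊆ T → c = (T \ D.1, p) ∨ c = D := by
            intro c hcy hcsub
            rcases em (minB T ∈ c.1) with hA | hA
            · exact Or.inl (blk_eq_of_mem hcy hLy hA hB1mem)
            · rcases em (t ∈ c.1) with ht | ht
              · exact Or.inr (blk_eq_of_mem hcy hDy ht htD')
              · exact absurd (hK' c hcy hcsub hA ht) id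
          have hb1e : b1 = (T \ D.1, p) := by
            rcases hblock b1 hb1y hb1T with h | h
            · exact h
            · exfalso
              apply hAD
              rw [← congrArg Prod.fst h]
              exact hAb1
          have hb2e : b2 = D := by
            rcases hblock b2 hb2y hb2T with h | h
            · exact absurd (h.trans hb1e.symm) (Ne.symm hne12)
            · exact h
          apply Subtype.ext
          rw [hzeq, hMeq, hb1e, hb2e, hx'eq]
      · -- b1 is not a block of y : the next split must be inside b1
        have hzeq' : z.1 = insert b1 (insert b2 (x.1.erase (T, t))) := by
          rw [hzeq, hMeq]
        have hT₂mem : (T₂, t₂) ∈ insert b1 (insert b2 (x.1.erase (T, t))) := by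
          rw [← hzeq']; exact hT₂z
        rcases mem_insert2 hT₂mem with hT₂e | hT₂e | hT₂e
        · -- (T₂, t₂) = b1
          have hT₂fst : T₂ = b1.1 := congrArg Prod.fst hT₂e
          have hT₂snd : t₂ = b1.2 := congrArg Prod.snd hT₂e
          have hT₂min : minB T₂ = minB b1.1 := by rw [hT₂fst]
          rcases em (pM = b1.2) with hu | hu
          · -- the split label has colour 1
            have htb1 : t ∈ b1.1 := by rw [← hpMt, hu]; exact blk_pt_mem hb1
            have htb2 : t ∉ b2.1 := fun ht => (Finset.disjoint_left.1 hd12 htb1) ht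
            rcases hcase with ⟨htD, hpt, hmax'⟩ | ⟨hD2, hLy, hK'⟩
            · have hble : minB b2.1 ≤ minB D.1 := hmax' b2 hb2y hb2T hAb2 htb2
              have hblt : minB b2.1 < minB D.1 := by
                rcases lt_or_eq_of_le hble with h | h
                · exact h
                · exfalso
                  apply hzx'
                  have hb2e : b2 = D := blk_minB_inj hb2y hDy h
                  have hb1e : b1 = (T \ D.1, p) := by
                    refine Prod.ext ?_ ?_
                    · rw [← congrArg Prod.fst hb2e]
                      exact left_part hd12 hunion
                    · rw [← hu, hpMt, hpt]
                  apply Subtype.ext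
                  rw [hzeq, hMeq, hb1e, hb2e, hx'eq]
              have hDb1 : D.1 ⊆ b1.1 := by
                rcases (hrz _ hb1).1 D hDy with hsub | hdisj
                · exact hsub
                · exfalso
                  have hDb2 : D.1 ⊆ b2.1 := by
                    intro i hi
                    have hiT : i ∈ T := hDsub hi
                    rw [← hunion] at hiT
                    rcases Finset.mem_union.1 hiT with h | h
                    · exact absurd h (Finset.disjoint_left.1 hdisj hi)
                    · exact h
                  have hb2e : b2 = D := (yblock_eq hDy hb2y hDb2).symm
                  rw [congrArg Prod.fst hb2e] at hblt
                  exact lt_irrefl _ hblt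
              have hDT₂ : D.1 ⊆ T₂ := by rw [hT₂fst]; exact hDb1
              have hAT₂D : minB T₂ ∉ D.1 := by
                rw [hT₂min, hminb1T]; exact hAD
              have ht₂D : t₂ ∉ D.1 := by
                rw [hT₂snd, ← hu, hpMt]; exact htD
              rcases hcase₂ with ⟨ht₂D₂, hp₂, hmax₂⟩ | ⟨hD₂2, hL₂y, hK₂'⟩
              · have hDD₂ : minB D.1 ≤ minB D₂.1 := hmax₂ D hDy hDT₂ hAT₂D ht₂D
                rw [if_pos hp₂.symm, if_pos hu]
                intro h
                rcases h with h | ⟨heq, hh⟩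
                · have h' : minB T₂ < minB b1.1 := h
                  rw [hT₂min] at h'
                  exact lt_irrefl _ h'
                · rcases hh with ⟨h1, _⟩ | ⟨_, _, hdd⟩
                  · have h1' : (true : Bool) = false := h1
                    simp at h1'
                  · have hdd' : minB D₂.1 < minB b2.1 := hdd
                    exact lt_irrefl _ ((hblt.trans_le hDD₂).trans hdd')
              · exact absurd (hK₂' D hDy hDT₂ hAT₂D ht₂D) id
            · exact absurd (hK' b2 hb2y hb2T hAb2 htb2) id
          · -- the split label has colour 0 : nothing is below it
            rw [if_neg hu]
            intro h
            rcases h with h | ⟨heq, hh⟩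
            · have h' : minB T₂ < minB b1.1 := h
              rw [hT₂min] at h'
              exact lt_irrefl _ h'
            · rcases hh with ⟨_, h2⟩ | ⟨_, h2, _⟩ <;>
              · have h2' : (false : Bool) = true := h2
                simp at h2'
        · -- (T₂, t₂) = b2 : impossible since b2 is a block of y
          exact absurd (show (T₂, t₂) ∈ y.1 by rw [hT₂e]; exact hb2y) hT₂y
        · -- (T₂, t₂) an untouched block of x : impossible by maximality
          exfalso
          have hT₂x : (T₂, t₂) ∈ x.1 := Finset.mem_of_mem_erase hT₂e
          have h1 : minB T₂ ≤ minB T := hTmax _ hT₂x hT₂y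
          have h2 : minB b1.1 ≤ minB T₂ := hT₂max _ hb1 hb1y
          rw [hminb1T] at h2
          exact (Finset.mem_erase.1 hT₂e).1
            (blk_minB_inj hT₂x hTx (le_antisymm h1 h2))
    · -- b2 is not a block of y : the next split is inside b2
      have h1 : minB b2.1 ≤ minB T₂ := hT₂max _ hb2 hb2y
      intro h
      rcases h with h | ⟨heq, _⟩
      · have h' : minB T₂ < minB b1.1 := h
        exact lt_irrefl _ ((h'.trans hlt).trans_le h1)
      · have heq' : minB T₂ = minB b1.1 := heq
        rw [heq'] at h1
        exact lt_irrefl _ (hlt.trans_le h1)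

/-! ### The master induction -/

/-- The full EL statement for the interval `[y, x]` of the dual poset. -/
def ELProp (y x : PPart A) : Prop :=
  ∃ c, IsSatChain (fun a b : PPart A => covPP b a) x y c ∧
    IncWord (fun a b : ℕ × ℕ × Bool => ltLp b a) (wordOf (fun a b : PPart A => labPP b a) c) ∧
    (∀ z rest, c = x :: z :: rest → CanStep y x z) ∧
    ∀ c', IsSatChain (fun a b : PPart A => covPP b a) x y c' → c' ≠ c →
      ¬ IncWord (fun a b : ℕ × ℕ × Bool => ltLp b a)
          (wordOf (fun a b : PPart A => labPP b a) c') ∧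
      List.Lex (fun a b : ℕ × ℕ × Bool => ltLp b a)
        (wordOf (fun a b : PPart A => labPP b a) c)
        (wordOf (fun a b : PPart A => labPP b a) c')

lemma canStep_props {y x z : PPart A} (hr : Refines y x) (hcs : CanStep y x z) :
    covPP z x ∧ Refines y z := by
  obtain ⟨T, t, D, p, hTx, hTy, hTmax, hDy, hDsub, hAD, hzeq, hcase⟩ := hcs
  have hcase' : (t ∉ D.1 ∧ p = t) ∨ (D.2 = t ∧ (T \ D.1, p) ∈ y.1) := by
    rcases hcase with ⟨h1, h2, _⟩ | ⟨h1, h2, _⟩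
    exacts [Or.inl ⟨h1, h2⟩, Or.inr ⟨h1, h2⟩]
  obtain ⟨h1, h2, _⟩ := canStep_main hr hTx hDy hDsub hAD hzeq hcase'
  exact ⟨h1, h2⟩

lemma master_eq (y : PPart A) : ELProp y y := by
  refine ⟨[y], satChain_single y, List.isChain_nil, ?_, ?_⟩
  · intro z rest h
    simp at h
  · intro c' hc' hne
    exact absurd (satChain_self hc') hne

lemma master (y : PPart A) (k : ℕ) :
    ∀ x : PPart A, Refines y x → y.1.card ≤ x.1.card + k → ELProp y x := by
  induction k with
  | zero =>
    intro x hr hcard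
    have hxy : x = y := ref_eq_of_card hr (by simpa using hcard)
    rw [hxy]
    exact master_eq y
  | succ k ih =>
    intro x hr hcard
    rcases em (x = y) with hxy | hxy
    · rw [hxy]
      exact master_eq y
    · obtain ⟨x', hcs⟩ := canStep_exists hr hxy
      obtain ⟨hcovx', hrefx'⟩ := canStep_props hr hcs
      have hcardx' : x'.1.card = x.1.card + 1 := cov_card hcovx'
      have hcard' : y.1.card ≤ x'.1.card + k := by omega
      obtain ⟨c₀, hsat₀, hinc₀, hstruct₀, huniq₀⟩ := ih x' hrefx' hcard'
      obtain ⟨tail₀, hc₀⟩ := satChain_shape hsat₀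
      have hsatc : IsSatChain (fun a b : PPart A => covPP b a) x y (x :: c₀) := by
        obtain ⟨hch, hhd, hlast⟩ := hsat₀
        refine ⟨?_, rfl, ?_⟩
        · rw [hc₀]
          rw [hc₀] at hch
          exact List.isChain_cons_cons.2 ⟨hcovx', hch⟩
        · rw [hc₀, List.getLast?_cons_cons, ← hc₀]
          exact hlast
      refine ⟨x :: c₀, hsatc, ?_, ?_, ?_⟩
      · -- the canonical chain is increasing
        rw [hc₀]
        cases tail₀ with
        | nil => exact List.isChain_singleton _
        | cons z₂ t₂ =>
          have hcs₂ : CanStep y x' z₂ := hstruct₀ z₂ t₂ hc₀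
          have hltlab := inc_lemma hr hcs hcs₂
          rw [hc₀] at hinc₀
          exact List.isChain_cons_cons.2 ⟨hltlab, hinc₀⟩
      · intro z rest h
        have h2 : c₀ = z :: rest := by injection h
        rw [hc₀] at h2
        have hzx' : x' = z := by injection h2
        rw [← hzx']
        exact hcs
      · intro c' hc' hnec
        obtain ⟨tail', rfl⟩ := satChain_shape hc'
        cases tail' with
        | nil =>
          exfalso
          have hlast := hc'.2.2
          simp at hlast
          exact hxy hlast
        | cons z rest =>
          obtain ⟨hcovz, hsatz⟩ := satChain_cons hc'
          have hrz : Refines y z := ref_of_le (satChain_le _ _ _ hsatz)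
          rcases em (z = x') with hzx' | hzx'
          · subst hzx'
            have hneq' : (z :: rest) ≠ c₀ := by
              intro hE
              apply hnec
              rw [hE]
            obtain ⟨hni, hlex⟩ := huniq₀ (z :: rest) hsatz hneq'
            constructor
            · intro hIc'
              exact hni (List.IsChain.tail hIc')
            · rw [hc₀]
              refine List.Lex.cons ?_
              rw [← hc₀]
              exact hlex
          · have hltlab : ltLp (labPP z x) (labPP x' x) :=
              (key_lemma hr hcs hcovz hrz).resolve_left hzx'
            have hzy : z ≠ y := by
              intro hE
              apply hzx'
              have h2 : z.1.card = x.1.card + 1 := cov_card hcovz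
              have h3 : x' = y := by
                refine ref_eq_of_card hrefx' ?_
                rw [hE] at h2
                omega
              rw [hE, ← h3]
            constructor
            · intro hIc'
              have hinct : IncWord (fun a b : ℕ × ℕ × Bool => ltLp b a)
                  (wordOf (fun a b : PPart A => labPP b a) (z :: rest)) :=
                List.IsChain.tail hIc'
              have hcardz : y.1.card ≤ z.1.card + k := by
                have := cov_card hcovz
                omega
              obtain ⟨cz, hsatz', hincz, hstructz, huniqz⟩ := ih z hrz hcardz
              have hzeqc : (z :: rest) = cz := by
                by_contra hne
                exact (huniqz _ hsatz hne).1 hinct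
              obtain ⟨tailz, hcz⟩ := satChain_shape hsatz'
              cases tailz with
              | nil =>
                apply hzy
                rw [hcz] at hzeqc
                have hrest : rest = ([] : List (PPart A)) := by injection hzeqc
                rw [hrest] at hsatz
                have hlast := hsatz.2.2
                simpa using hlast
              | cons z₂ tz =>
                have hcs₂ : CanStep y z z₂ := hstructz z₂ tz hcz
                have hthird := third_lemma hr hcs hcovz hrz hzx' hcs₂
                apply hthird
                rw [hcz] at hzeqc
                have hrest : rest = z₂ :: tz := by injection hzeqc
                rw [hrest] at hIc'
                exact (List.isChain_cons_cons.1 hIc').1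
            · rw [hc₀]
              exact List.Lex.rel hltlab

end ELProofDev

/-- The dual labeling `λ•^*` is an EL-labeling of the order dual
`(Πₙ•)^*`: the cover relations of the order dual carry the same labels, ordered in the
order dual of `Λₙ•`. -/
theorem pointed_dual_lambda_is_EL (n : ℕ) :
    IsELLabeling (fun x y : PPart (Finset.Icc 1 n) => covPP y x)
      (fun x y => labPP y x) (fun a b : ℕ × ℕ × Bool => ltLp b a) := by
  intro x y hle
  have hr : Refines y x := ref_of_le hle
  obtain ⟨c, h1, h2, h3, h4⟩ := master y y.1.card x hr (Nat.le_add_left _ _)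
  exact ⟨c, ⟨h1, h2⟩, fun c' hc' hne => h4 c' hc' hne⟩
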